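/- arXiv:1404.1817 — 6 statements merged into one kernel-verified Lean document; each statement's English description precedes it below -/
import Mathlib

section
/- Let I be a finite nonempty index set and (G_i)_{i∈I} a family of groups. Assume there are two distinct indices i₀, i₁ ∈ I such that G_{i₀} is an infinite group and G_{i₁} is a nontrivial group. Then for every element g of the free product ∗_{i∈I} G_i with g ≠ 1, the centralizer of g in ∗_{i∈I} G_i is a subgroup of infinite index. -/
open Monoid.CoprodI

section Helpers

variable {I : Type*} [DecidableEq I] {G : I → Type*} [∀ i, Group (G i)]
  [∀ i, DecidableEq (G i)]

private lemma word_prod_injective :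
    Function.Injective (Monoid.CoprodI.Word.prod : Monoid.CoprodI.Word G → Monoid.CoprodI G) :=
  fun a b h => (Monoid.CoprodI.Word.equiv (M := G)).symm.injective h

private lemma neword_toList_eq {j₁ k₁ j₂ k₂ : I} {w₁ : NeWord G j₁ k₁} {w₂ : NeWord G j₂ k₂}
    (h : w₁.prod = w₂.prod) : w₁.toList = w₂.toList :=
  congrArg Monoid.CoprodI.Word.toList (word_prod_injective h)

private lemma neword_head_eq {j₁ k₁ j₂ k₂ : I} {w₁ : NeWord G j₁ k₁} {w₂ : NeWord G j₂ k₂}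
    (h : w₁.prod = w₂.prod) :
    (⟨j₁, w₁.head⟩ : Σ i, G i) = ⟨j₂, w₂.head⟩ := by
  have h1 := congrArg List.head? (neword_toList_eq h)
  rw [w₁.toList_head?, w₂.toList_head?] at h1
  exact Option.some_injective _ h1

private lemma replaceHead_length : ∀ {i j : I} (x : G i) (hx : x ≠ 1) (w : NeWord G i j),
    (Monoid.CoprodI.NeWord.replaceHead x hx w).toList.length = w.toList.length
  | _, _, _, _, .singleton _ _ => rfl
  | _, _, x, hx, .append w₁ hne w₂ => by
      show ((Monoid.CoprodI.NeWord.replaceHead x hx w₁).toList ++ w₂.toList).length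
        = (w₁.toList ++ w₂.toList).length
      simp [replaceHead_length x hx w₁]

/-- If infinitely many elements of the `i`-th factor commute with `h ≠ 1`, then `h` lies in the
image of the `i`-th factor. -/
private lemma eq_of_of_comm {i : I} {h : Monoid.CoprodI G} (hh : h ≠ 1)
    (hK : {z : G i | Monoid.CoprodI.of z * h = h * Monoid.CoprodI.of z}.Infinite) :
    ∃ a : G i, h = Monoid.CoprodI.of a := by
  have hprod : Monoid.CoprodI.Word.prod (Monoid.CoprodI.Word.equiv h) = h :=
    (Monoid.CoprodI.Word.equiv (M := G)).symm_apply_apply h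
  have hw : (Monoid.CoprodI.Word.equiv h) ≠ Monoid.CoprodI.Word.empty := by
    intro he
    apply hh
    rw [he] at hprod
    rw [Monoid.CoprodI.Word.prod_empty] at hprod
    exact hprod.symm
  obtain ⟨j, k, u, hu⟩ := Monoid.CoprodI.NeWord.of_word _ hw
  have hup : u.prod = h := by
    show u.toWord.prod = h
    rw [hu]; exact hprod
  rcases eq_or_ne i j with rfl | hj
  · rcases eq_or_ne i k with rfl | hk
    · -- both ends in factor `i`
      cases u with
      | singleton a ha => exact ⟨a, by rw [← hup, Monoid.CoprodI.NeWord.prod_singleton]⟩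
      | append v₁ hvne v₂ =>
        set w := Monoid.CoprodI.NeWord.append v₁ hvne v₂ with hwdef
        exfalso
        have hfin : ({1, w.head⁻¹, w.last⁻¹} : Set (G i)).Finite :=
          (Set.finite_singleton _).insert _ |>.insert _
        obtain ⟨z, hzS, hznot⟩ := (hK.diff hfin).nonempty
        simp only [Set.mem_insert_iff, Set.mem_singleton_iff, not_or] at hznot
        obtain ⟨hz1, hzh, hzl⟩ := hznot
        have hcond1 : z * w.head ≠ 1 := fun hc => hzh (eq_inv_of_mul_eq_one_left hc)
        have hcond2 : z⁻¹ * w.inv.head ≠ 1 := by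
          rw [Monoid.CoprodI.NeWord.inv_head]
          intro hc
          apply hzl
          have := eq_inv_of_mul_eq_one_left hc
          rw [inv_inv] at this
          rw [← this, inv_inv]
        set w₁ := w.mulHead z hcond1 with hw₁
        set w₂ := (w.inv.mulHead z⁻¹ hcond2).inv with hw₂
        have hp₁ : w₁.prod = Monoid.CoprodI.of z * h := by
          rw [hw₁, Monoid.CoprodI.NeWord.mulHead_prod, hup]
        have hp₂ : w₂.prod = h * Monoid.CoprodI.of z := by
          rw [hw₂, Monoid.CoprodI.NeWord.inv_prod, Monoid.CoprodI.NeWord.mulHead_prod,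
            Monoid.CoprodI.NeWord.inv_prod, hup]
          simp [mul_inv_rev]
        have hpe : w₁.prod = w₂.prod := by
          rw [hp₁, hp₂]
          exact hzS
        have hhead := neword_head_eq hpe
        have hh₁ : w₁.head = z * w.head := Monoid.CoprodI.NeWord.mulHead_head _ _ _
        have hh₂ : w₂.head = w.head := by
          rw [hw₂, Monoid.CoprodI.NeWord.inv_head]
          have hlast : (w.inv.mulHead z⁻¹ hcond2).last = w.inv.last := rfl
          rw [hlast, Monoid.CoprodI.NeWord.inv_last, inv_inv]
        rw [hh₁, hh₂] at hhead
        have : z * w.head = w.head := by simpa using hhead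
        exact hz1 (by rwa [mul_eq_right] at this)
    · -- head in factor `i`, tail not
      exfalso
      have hfin : ({1, u.head⁻¹} : Set (G i)).Finite :=
        (Set.finite_singleton _).insert _
      obtain ⟨z, hzS, hznot⟩ := (hK.diff hfin).nonempty
      simp only [Set.mem_insert_iff, Set.mem_singleton_iff, not_or] at hznot
      obtain ⟨hz1, hzh⟩ := hznot
      have hcond1 : z * u.head ≠ 1 := fun hc => hzh (eq_inv_of_mul_eq_one_left hc)
      have hp₁ : (u.mulHead z hcond1).prod = Monoid.CoprodI.of z * h := by
        rw [Monoid.CoprodI.NeWord.mulHead_prod, hup]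
      have hp₂ : (u.append hk.symm (.singleton z hz1)).prod = h * Monoid.CoprodI.of z := by
        rw [Monoid.CoprodI.NeWord.append_prod, Monoid.CoprodI.NeWord.prod_singleton, hup]
      have hpe : (u.mulHead z hcond1).prod = (u.append hk.symm (.singleton z hz1)).prod := by
        rw [hp₁, hp₂]; exact hzS
      have hlen := congrArg List.length (neword_toList_eq hpe)
      have h1 : (u.mulHead z hcond1).toList.length = u.toList.length :=
        replaceHead_length _ _ u
      have h2 : (u.append hk.symm (.singleton z hz1)).toList.length = u.toList.length + 1 := by
        show (u.toList ++ [(⟨i, z⟩ : Σ i, G i)]).length = u.toList.length + 1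
        simp
      rw [h1, h2] at hlen
      omega
  · rcases eq_or_ne i k with rfl | hk
    · -- tail in factor `i`, head not : mirror image via inverses
      exfalso
      have hfin : ({1, u.last⁻¹} : Set (G i)).Finite :=
        (Set.finite_singleton _).insert _
      obtain ⟨z, hzS, hznot⟩ := (hK.diff hfin).nonempty
      simp only [Set.mem_insert_iff, Set.mem_singleton_iff, not_or] at hznot
      obtain ⟨hz1, hzl⟩ := hznot
      have hz1' : z⁻¹ ≠ 1 := inv_ne_one.mpr hz1
      have hcond1 : z⁻¹ * u.inv.head ≠ 1 := by
        rw [Monoid.CoprodI.NeWord.inv_head]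
        intro hc
        apply hzl
        have := eq_inv_of_mul_eq_one_left hc
        rw [inv_inv] at this
        rw [← this, inv_inv]
      have hcomm : Monoid.CoprodI.of z⁻¹ * h⁻¹ = h⁻¹ * Monoid.CoprodI.of z⁻¹ := by
        have := hzS
        simp only [Set.mem_setOf_eq] at this
        rw [map_inv]
        calc (Monoid.CoprodI.of z)⁻¹ * h⁻¹ = (h * Monoid.CoprodI.of z)⁻¹ := by
              rw [mul_inv_rev]
          _ = (Monoid.CoprodI.of z * h)⁻¹ := by rw [this]
          _ = h⁻¹ * (Monoid.CoprodI.of z)⁻¹ := by rw [mul_inv_rev]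
      have hp₁ : (u.inv.mulHead z⁻¹ hcond1).prod = Monoid.CoprodI.of z⁻¹ * h⁻¹ := by
        rw [Monoid.CoprodI.NeWord.mulHead_prod, Monoid.CoprodI.NeWord.inv_prod, hup]
      have hp₂ : (u.inv.append hj.symm (.singleton z⁻¹ hz1')).prod
          = h⁻¹ * Monoid.CoprodI.of z⁻¹ := by
        rw [Monoid.CoprodI.NeWord.append_prod, Monoid.CoprodI.NeWord.prod_singleton,
          Monoid.CoprodI.NeWord.inv_prod, hup]
      have hpe : (u.inv.mulHead z⁻¹ hcond1).prod
          = (u.inv.append hj.symm (.singleton z⁻¹ hz1')).prod := by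
        rw [hp₁, hp₂]; exact hcomm
      have hlen := congrArg List.length (neword_toList_eq hpe)
      have h1 : (u.inv.mulHead z⁻¹ hcond1).toList.length = u.inv.toList.length :=
        replaceHead_length _ _ u.inv
      have h2 : (u.inv.append hj.symm (.singleton z⁻¹ hz1')).toList.length
          = u.inv.toList.length + 1 := by
        show (u.inv.toList ++ [(⟨i, z⁻¹⟩ : Σ i, G i)]).length = u.inv.toList.length + 1
        simp
      rw [h1, h2] at hlen
      omega
    · -- neither end in factor `i`
      exfalso
      obtain ⟨z, hzS, hznot⟩ := (hK.diff (Set.finite_singleton 1)).nonempty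
      simp only [Set.mem_singleton_iff] at hznot
      have hp₁ : ((Monoid.CoprodI.NeWord.singleton z hznot).append hj u).prod
          = Monoid.CoprodI.of z * h := by
        rw [Monoid.CoprodI.NeWord.append_prod, Monoid.CoprodI.NeWord.prod_singleton, hup]
      have hp₂ : (u.append hk.symm (.singleton z hznot)).prod = h * Monoid.CoprodI.of z := by
        rw [Monoid.CoprodI.NeWord.append_prod, Monoid.CoprodI.NeWord.prod_singleton, hup]
      have hpe : ((Monoid.CoprodI.NeWord.singleton z hznot).append hj u).prod
          = (u.append hk.symm (.singleton z hznot)).prod := by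
        rw [hp₁, hp₂]; exact hzS
      have hhead := neword_head_eq hpe
      exact hj (congrArg Sigma.fst hhead)

end Helpers

/-- Let `I` be a finite nonempty index set and `(G i)_{i ∈ I}` a family of
groups. Assume there are two distinct indices `i₀ i₁ : I` such that `G i₀` is infinite and
`G i₁` is nontrivial. Then for every `g ≠ 1` in the free product `∗_{i ∈ I} G i`
(`Monoid.CoprodI G`), the centralizer of `g` has infinite index. -/
theorem centralizer_infinite_index_coprodI
    {I : Type*} [Fintype I] [Nonempty I] (G : I → Type*) [∀ i, Group (G i)]
    (i₀ i₁ : I) (hne : i₀ ≠ i₁) [Infinite (G i₀)] [Nontrivial (G i₁)]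
    (g : Monoid.CoprodI G) (hg : g ≠ 1) :
    (Subgroup.centralizer ({g} : Set (Monoid.CoprodI G))).index = 0 := by
  classical
  set C := Subgroup.centralizer ({g} : Set (Monoid.CoprodI G)) with hCdef
  rw [Subgroup.index_eq_zero_iff_infinite]
  by_contra hinf
  rw [not_infinite_iff_finite] at hinf
  -- the natural map from `G i₀` to the (finite) coset space has an infinite fiber
  set f : G i₀ → Monoid.CoprodI G ⧸ C :=
    fun x => QuotientGroup.mk (Monoid.CoprodI.of x) with hfdef
  obtain ⟨q, hq⟩ := Finite.exists_infinite_fiber f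
  have hfib : (f ⁻¹' {q}).Infinite := Set.infinite_coe_iff.mp hq
  obtain ⟨x₀, hx₀⟩ := hfib.nonempty
  -- hence infinitely many elements of `G i₀` commute with `g`
  have hS : {z : G i₀ | Monoid.CoprodI.of z * g = g * Monoid.CoprodI.of z}.Infinite := by
    refine Set.Infinite.mono ?_ (hfib.image (Set.injOn_of_injective (mul_right_injective x₀⁻¹)))
    rintro _ ⟨x, hx, rfl⟩
    simp only [Set.mem_preimage, Set.mem_singleton_iff] at hx hx₀
    have hmem : (Monoid.CoprodI.of x₀)⁻¹ * Monoid.CoprodI.of x ∈ C := by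
      rw [← QuotientGroup.eq]
      exact hx₀.trans hx.symm
    have hcomm := Subgroup.mem_centralizer_iff.mp hmem g (Set.mem_singleton g)
    simp only [Set.mem_setOf_eq]
    rw [map_mul, map_inv]
    exact hcomm.symm
  obtain ⟨a, rfl⟩ := eq_of_of_comm hg hS
  have ha : a ≠ 1 := fun h => hg (by rw [h, map_one])
  obtain ⟨y, hy⟩ := exists_ne (1 : G i₁)
  -- the conjugating words
  have hy' : y⁻¹ ≠ 1 := inv_ne_one.mpr hy
  let W : ∀ x : G i₀, x ≠ 1 → NeWord G i₀ i₀ := fun x hx =>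
    (Monoid.CoprodI.NeWord.singleton x hx).append hne
      ((Monoid.CoprodI.NeWord.singleton y hy).append (Ne.symm hne)
        ((Monoid.CoprodI.NeWord.singleton a ha).append hne
          ((Monoid.CoprodI.NeWord.singleton y⁻¹ hy').append (Ne.symm hne)
            (Monoid.CoprodI.NeWord.singleton x⁻¹ (inv_ne_one.mpr hx)))))
  have hWprod : ∀ (x : G i₀) (hx : x ≠ 1),
      (W x hx).prod = (Monoid.CoprodI.of x * Monoid.CoprodI.of y) * Monoid.CoprodI.of a *
        (Monoid.CoprodI.of x * Monoid.CoprodI.of y)⁻¹ := by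
    intro x hx
    simp only [W, Monoid.CoprodI.NeWord.append_prod, Monoid.CoprodI.NeWord.prod_singleton,
      mul_inv_rev, map_inv]
    group
  have hWhead : ∀ (x : G i₀) (hx : x ≠ 1), (W x hx).head = x := fun x hx => rfl
  -- second finite-fibers argument
  set f₂ : G i₀ → Monoid.CoprodI G ⧸ C :=
    fun x => QuotientGroup.mk (Monoid.CoprodI.of x * Monoid.CoprodI.of y) with hf₂def
  obtain ⟨q₂, hq₂⟩ := Finite.exists_infinite_fiber f₂
  have hfib₂ : (f₂ ⁻¹' {q₂}).Infinite := Set.infinite_coe_iff.mp hq₂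
  obtain ⟨x₁, hx₁⟩ := (hfib₂.diff (Set.finite_singleton 1)).nonempty
  obtain ⟨x₂, hx₂⟩ :=
    ((hfib₂.diff (Set.finite_singleton 1)).diff (Set.finite_singleton x₁)).nonempty
  obtain ⟨⟨hx₂fib, hx₂1⟩, hx₂x₁⟩ := hx₂
  obtain ⟨hx₁fib, hx₁1⟩ := hx₁
  simp only [Set.mem_preimage, Set.mem_singleton_iff] at hx₁fib hx₂fib hx₁1 hx₂1 hx₂x₁
  -- from lying in the same coset, conjugates agree
  have hmem : (Monoid.CoprodI.of x₁ * Monoid.CoprodI.of y)⁻¹ *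
      (Monoid.CoprodI.of x₂ * Monoid.CoprodI.of y) ∈ C := by
    rw [← QuotientGroup.eq]
    exact hx₁fib.trans hx₂fib.symm
  have hcomm := Subgroup.mem_centralizer_iff.mp hmem _ (Set.mem_singleton _)
  set u₁ := Monoid.CoprodI.of x₁ * Monoid.CoprodI.of y with hu₁
  set u₂ := Monoid.CoprodI.of x₂ * Monoid.CoprodI.of y with hu₂
  have hconj : u₁ * Monoid.CoprodI.of a * u₁⁻¹ = u₂ * Monoid.CoprodI.of a * u₂⁻¹ := by
    have h' : Monoid.CoprodI.of a * (u₁⁻¹ * u₂) = (u₁⁻¹ * u₂) * Monoid.CoprodI.of a := hcomm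
    have := congrArg (fun t => u₁ * t * u₂⁻¹) h'
    simpa [mul_assoc] using this
  have hpe : (W x₁ hx₁1).prod = (W x₂ hx₂1).prod := by
    rw [hWprod, hWprod]
    exact hconj
  have hhead := neword_head_eq hpe
  rw [hWhead, hWhead] at hhead
  exact hx₂x₁ (by simpa using hhead.symm)
end

section
/- Let G₁ be an infinite group and G₂ a nontrivial group. Then for every element g ≠ 1 of the free product G₁ ∗ G₂, the centralizer of g in G₁ ∗ G₂ is a subgroup of infinite index. -/
open Monoid Monoid.CoprodI

namespace CentAux

variable {ι : Type*} {G : ι → Type*} [∀ i, Group (G i)]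

/-- Product of a list of letters in the free product. -/
def W (l : List (Σ i, G i)) : CoprodI G := (l.map fun p => of p.2).prod

@[simp] theorem W_nil : W ([] : List (Σ i, G i)) = 1 := rfl

@[simp] theorem W_cons (c : Σ i, G i) (l : List (Σ i, G i)) :
    W (c :: l) = of c.2 * W l := by simp [W]

@[simp] theorem W_append (l₁ l₂ : List (Σ i, G i)) :
    W (l₁ ++ l₂) = W l₁ * W l₂ := by simp [W]

@[simp] theorem W_singleton (c : Σ i, G i) : W [c] = of c.2 := by simp [W]

theorem prod_injective [DecidableEq ι] [∀ i, DecidableEq (G i)] :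
    Function.Injective (Word.prod : Word G → CoprodI G) := by
  have h : (Word.prod : Word G → CoprodI G) = ⇑(Word.equiv (M := G)).symm := rfl
  rw [h]
  exact (Word.equiv (M := G)).symm.injective

theorem eq_lists [DecidableEq ι] [∀ i, DecidableEq (G i)]
    {l₁ l₂ : List (Σ i, G i)} (h1 : ∀ p ∈ l₁, p.2 ≠ 1)
    (h2 : l₁.Chain' fun a b => a.1 ≠ b.1)
    (h3 : ∀ p ∈ l₂, p.2 ≠ 1) (h4 : l₂.Chain' fun a b => a.1 ≠ b.1)
    (h : W l₁ = W l₂) : l₁ = l₂ :=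
  congrArg Word.toList (prod_injective (a₁ := ⟨l₁, h1, h2⟩) (a₂ := ⟨l₂, h3, h4⟩) h)

theorem caseA [DecidableEq ι] [∀ i, DecidableEq (G i)]
    {i j t : ι} (hji : j ≠ i) (hti : t ≠ i)
    {a : G i} (ha : a ≠ 1) {m : G j} {z : G t}
    {mid : List (Σ i, G i)} {x : CoprodI G}
    (hx' : W ((⟨j, m⟩ : Σ i, G i) :: (mid ++ [(⟨t, z⟩ : Σ i, G i)])) = x)
    (hne : ∀ p ∈ ((⟨j, m⟩ : Σ i, G i) :: (mid ++ [(⟨t, z⟩ : Σ i, G i)])), p.2 ≠ 1)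
    (hch : List.Chain' (fun p q => p.1 ≠ q.1)
      ((⟨j, m⟩ : Σ i, G i) :: (mid ++ [(⟨t, z⟩ : Σ i, G i)])))
    (hcomm : of a * x = x * of a) : False := by
  have hform : ((⟨j, m⟩ : Σ i, G i) :: (mid ++ [(⟨t, z⟩ : Σ i, G i)]))
      = ((⟨j, m⟩ : Σ i, G i) :: mid) ++ [(⟨t, z⟩ : Σ i, G i)] := by simp
  have hlast : ((⟨j, m⟩ : Σ i, G i) :: (mid ++ [(⟨t, z⟩ : Σ i, G i)])).getLast?
      = some (⟨t, z⟩ : Σ i, G i) := by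
    rw [hform, List.getLast?_concat]
  have hL : W ((⟨i, a⟩ : Σ i, G i) :: ((⟨j, m⟩ : Σ i, G i) :: (mid ++ [(⟨t, z⟩ : Σ i, G i)])))
      = of a * x := by
    rw [W_cons, hx']
  have hR : W (((⟨j, m⟩ : Σ i, G i) :: (mid ++ [(⟨t, z⟩ : Σ i, G i)])) ++ [(⟨i, a⟩ : Σ i, G i)])
      = x * of a := by
    rw [W_append, hx', W_singleton]
  have heq := eq_lists
    (List.forall_mem_cons.mpr ⟨ha, hne⟩)
    (List.isChain_cons.mpr ⟨fun y hy => by simp at hy; subst hy; exact fun h => hji h.symm, hch⟩)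
    (List.forall_mem_append.mpr ⟨hne, List.forall_mem_singleton.mpr ha⟩)
    (List.isChain_append.mpr ⟨hch, List.isChain_singleton _, by
      intro p hp y hy
      simp only [List.head?_cons, Option.mem_some_iff] at hy
      subst hy
      rw [hlast] at hp
      simp only [Option.mem_some_iff] at hp
      subst hp
      exact hti⟩)
    (hL.trans (hcomm.trans hR.symm))
  simp only [List.cons_append, List.cons.injEq] at heq
  exact hji (congrArg Sigma.fst heq.1).symm

theorem caseB [DecidableEq ι] [∀ i, DecidableEq (G i)]
    {i t : ι} (hti : t ≠ i)
    {a m : G i} (ha : a ≠ 1) {z : G t}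
    {mid : List (Σ i, G i)} {x : CoprodI G}
    (hx' : W ((⟨i, m⟩ : Σ i, G i) :: (mid ++ [(⟨t, z⟩ : Σ i, G i)])) = x)
    (hne : ∀ p ∈ ((⟨i, m⟩ : Σ i, G i) :: (mid ++ [(⟨t, z⟩ : Σ i, G i)])), p.2 ≠ 1)
    (hch : List.Chain' (fun p q => p.1 ≠ q.1)
      ((⟨i, m⟩ : Σ i, G i) :: (mid ++ [(⟨t, z⟩ : Σ i, G i)])))
    (hcomm : of a * x = x * of a) : False := by
  have hform : ((⟨i, m⟩ : Σ i, G i) :: (mid ++ [(⟨t, z⟩ : Σ i, G i)]))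
      = ((⟨i, m⟩ : Σ i, G i) :: mid) ++ [(⟨t, z⟩ : Σ i, G i)] := by simp
  have hlast : ((⟨i, m⟩ : Σ i, G i) :: (mid ++ [(⟨t, z⟩ : Σ i, G i)])).getLast?
      = some (⟨t, z⟩ : Σ i, G i) := by
    rw [hform, List.getLast?_concat]
  have htail : ∀ p ∈ mid ++ [(⟨t, z⟩ : Σ i, G i)], p.2 ≠ 1 :=
    (List.forall_mem_cons.mp hne).2
  have hch2 : List.Chain' (fun p q : Σ i, G i => p.1 ≠ q.1)
      (mid ++ [(⟨t, z⟩ : Σ i, G i)]) := hch.tail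
  have hch1 : ∀ y ∈ (mid ++ [(⟨t, z⟩ : Σ i, G i)]).head?, i ≠ y.1 :=
    (List.isChain_cons.mp hch).1
  have hxfac : x = of m * (W mid * of z) := by
    rw [← hx', W_cons, W_append, W_singleton]
  -- right side: append the letter a at the end
  have hR : W (((⟨i, m⟩ : Σ i, G i) :: (mid ++ [(⟨t, z⟩ : Σ i, G i)])) ++ [(⟨i, a⟩ : Σ i, G i)])
      = x * of a := by
    rw [W_append, hx', W_singleton]
  have hRne : ∀ p ∈ ((⟨i, m⟩ : Σ i, G i) :: (mid ++ [(⟨t, z⟩ : Σ i, G i)])) ++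
      [(⟨i, a⟩ : Σ i, G i)], p.2 ≠ 1 :=
    List.forall_mem_append.mpr ⟨hne, List.forall_mem_singleton.mpr ha⟩
  have hRch : List.Chain' (fun p q : Σ i, G i => p.1 ≠ q.1)
      (((⟨i, m⟩ : Σ i, G i) :: (mid ++ [(⟨t, z⟩ : Σ i, G i)])) ++ [(⟨i, a⟩ : Σ i, G i)]) :=
    List.isChain_append.mpr ⟨hch, List.isChain_singleton _, by
      intro p hp y hy
      simp only [List.head?_cons, Option.mem_some_iff] at hy
      subst hy
      rw [hlast] at hp
      simp only [Option.mem_some_iff] at hp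
      subst hp
      exact hti⟩
  by_cases ham : a * m = 1
  · have hL : W (mid ++ [(⟨t, z⟩ : Σ i, G i)]) = of a * x := by
      rw [hxfac, W_append, W_singleton, ← mul_assoc, ← map_mul, ham, map_one, one_mul]
    have heq := eq_lists htail hch2 hRne hRch (hL.trans (hcomm.trans hR.symm))
    have hlen := congrArg List.length heq
    simp at hlen
  · have hL : W ((⟨i, a * m⟩ : Σ i, G i) :: (mid ++ [(⟨t, z⟩ : Σ i, G i)])) = of a * x := by
      simp only [W_cons, W_append, W_singleton, W_nil, map_mul, mul_assoc, mul_one, hxfac]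
    have heq := eq_lists
      (List.forall_mem_cons.mpr ⟨ham, htail⟩)
      (List.isChain_cons.mpr ⟨hch1, hch2⟩)
      hRne hRch (hL.trans (hcomm.trans hR.symm))
    have hlen := congrArg List.length heq
    simp at hlen

theorem caseC [DecidableEq ι] [∀ i, DecidableEq (G i)]
    {i j : ι} (hji : j ≠ i)
    {a z : G i} (ha : a ≠ 1) {m : G j}
    {mid : List (Σ i, G i)} {x : CoprodI G}
    (hx' : W ((⟨j, m⟩ : Σ i, G i) :: (mid ++ [(⟨i, z⟩ : Σ i, G i)])) = x)
    (hne : ∀ p ∈ ((⟨j, m⟩ : Σ i, G i) :: (mid ++ [(⟨i, z⟩ : Σ i, G i)])), p.2 ≠ 1)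
    (hch : List.Chain' (fun p q => p.1 ≠ q.1)
      ((⟨j, m⟩ : Σ i, G i) :: (mid ++ [(⟨i, z⟩ : Σ i, G i)])))
    (hcomm : of a * x = x * of a) : False := by
  have hform : ((⟨j, m⟩ : Σ i, G i) :: (mid ++ [(⟨i, z⟩ : Σ i, G i)]))
      = ((⟨j, m⟩ : Σ i, G i) :: mid) ++ [(⟨i, z⟩ : Σ i, G i)] := by simp
  have hch' : List.Chain' (fun p q : Σ i, G i => p.1 ≠ q.1)
      (((⟨j, m⟩ : Σ i, G i) :: mid) ++ [(⟨i, z⟩ : Σ i, G i)]) := hform ▸ hch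
  have hchpre : List.Chain' (fun p q : Σ i, G i => p.1 ≠ q.1)
      ((⟨j, m⟩ : Σ i, G i) :: mid) := (List.isChain_append.mp hch').1
  have hjunc : ∀ p ∈ ((⟨j, m⟩ : Σ i, G i) :: mid).getLast?, p.1 ≠ i := by
    intro p hp
    exact (List.isChain_append.mp hch').2.2 p hp (⟨i, z⟩ : Σ i, G i) (by simp)
  have hnepre : ∀ p ∈ (⟨j, m⟩ : Σ i, G i) :: mid, p.2 ≠ 1 := by
    intro p hp
    exact hne p (by rw [hform]; exact List.mem_append_left _ hp)
  have hz1 : z ≠ 1 := hne ⟨i, z⟩ (by simp)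
  have hxfac : x = of m * (W mid * of z) := by
    rw [← hx', W_cons, W_append, W_singleton]
  have hL : W ((⟨i, a⟩ : Σ i, G i) :: ((⟨j, m⟩ : Σ i, G i) :: (mid ++ [(⟨i, z⟩ : Σ i, G i)])))
      = of a * x := by
    rw [W_cons, hx']
  have hLne : ∀ p ∈ (⟨i, a⟩ : Σ i, G i) ::
      ((⟨j, m⟩ : Σ i, G i) :: (mid ++ [(⟨i, z⟩ : Σ i, G i)])), p.2 ≠ 1 :=
    List.forall_mem_cons.mpr ⟨ha, hne⟩
  have hLch : List.Chain' (fun p q : Σ i, G i => p.1 ≠ q.1)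
      ((⟨i, a⟩ : Σ i, G i) :: ((⟨j, m⟩ : Σ i, G i) :: (mid ++ [(⟨i, z⟩ : Σ i, G i)]))) :=
    List.isChain_cons.mpr ⟨fun y hy => by
      simp only [List.head?_cons, Option.mem_some_iff] at hy
      subst hy
      exact fun h => hji h.symm, hch⟩
  by_cases haz : z * a = 1
  · have hR : W ((⟨j, m⟩ : Σ i, G i) :: mid) = x * of a := by
      rw [hxfac]
      simp only [W_cons, mul_assoc, ← map_mul, haz, map_one, mul_one]
    have heq := eq_lists hLne hLch hnepre hchpre (hL.trans (hcomm.trans hR.symm))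
    have hlen := congrArg List.length heq
    simp at hlen
    omega
  · have hR : W (((⟨j, m⟩ : Σ i, G i) :: mid) ++ [(⟨i, z * a⟩ : Σ i, G i)]) = x * of a := by
      simp only [W_cons, W_append, W_singleton, W_nil, map_mul, mul_assoc, mul_one, hxfac]
    have heq := eq_lists hLne hLch
      (List.forall_mem_append.mpr ⟨hnepre, List.forall_mem_singleton.mpr haz⟩)
      (List.isChain_append.mpr ⟨hchpre, List.isChain_singleton _, by
        intro p hp y hy
        simp only [List.head?_cons, Option.mem_some_iff] at hy
        subst hy
        exact hjunc p hp⟩)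
      (hL.trans (hcomm.trans hR.symm))
    simp only [List.cons_append, List.cons.injEq] at heq
    exact hji (congrArg Sigma.fst heq.1).symm

theorem caseD [DecidableEq ι] [∀ i, DecidableEq (G i)]
    {i : ι} {a m z : G i} (ha : a ≠ 1)
    {mid : List (Σ i, G i)} {x : CoprodI G}
    (hx' : W ((⟨i, m⟩ : Σ i, G i) :: (mid ++ [(⟨i, z⟩ : Σ i, G i)])) = x)
    (hne : ∀ p ∈ ((⟨i, m⟩ : Σ i, G i) :: (mid ++ [(⟨i, z⟩ : Σ i, G i)])), p.2 ≠ 1)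
    (hch : List.Chain' (fun p q => p.1 ≠ q.1)
      ((⟨i, m⟩ : Σ i, G i) :: (mid ++ [(⟨i, z⟩ : Σ i, G i)])))
    (hcomm : of a * x = x * of a) : False := by
  have hform : ((⟨i, m⟩ : Σ i, G i) :: (mid ++ [(⟨i, z⟩ : Σ i, G i)]))
      = ((⟨i, m⟩ : Σ i, G i) :: mid) ++ [(⟨i, z⟩ : Σ i, G i)] := by simp
  have hch' : List.Chain' (fun p q : Σ i, G i => p.1 ≠ q.1)
      (((⟨i, m⟩ : Σ i, G i) :: mid) ++ [(⟨i, z⟩ : Σ i, G i)]) := hform ▸ hch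
  have hchpre : List.Chain' (fun p q : Σ i, G i => p.1 ≠ q.1)
      ((⟨i, m⟩ : Σ i, G i) :: mid) := (List.isChain_append.mp hch').1
  have hjunc : ∀ p ∈ ((⟨i, m⟩ : Σ i, G i) :: mid).getLast?, p.1 ≠ i := by
    intro p hp
    exact (List.isChain_append.mp hch').2.2 p hp (⟨i, z⟩ : Σ i, G i) (by simp)
  have hnepre : ∀ p ∈ (⟨i, m⟩ : Σ i, G i) :: mid, p.2 ≠ 1 := by
    intro p hp
    exact hne p (by rw [hform]; exact List.mem_append_left _ hp)
  have htail : ∀ p ∈ mid ++ [(⟨i, z⟩ : Σ i, G i)], p.2 ≠ 1 :=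
    (List.forall_mem_cons.mp hne).2
  have hch2 : List.Chain' (fun p q : Σ i, G i => p.1 ≠ q.1)
      (mid ++ [(⟨i, z⟩ : Σ i, G i)]) := hch.tail
  have hch1 : ∀ y ∈ (mid ++ [(⟨i, z⟩ : Σ i, G i)]).head?, i ≠ y.1 :=
    (List.isChain_cons.mp hch).1
  have hxfac : x = of m * (W mid * of z) := by
    rw [← hx', W_cons, W_append, W_singleton]
  rcases mid with _ | ⟨d, mid'⟩
  · simp [List.Chain'] at hch
  have hdi : d.1 ≠ i := fun h => hch1 d (by simp) h.symm
  by_cases ham : a * m = 1 <;> by_cases haz : z * a = 1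
  · -- both cancel
    have hL : W ((d :: mid') ++ [(⟨i, z⟩ : Σ i, G i)]) = of a * x := by
      rw [hxfac, W_append, W_singleton, ← mul_assoc, ← map_mul, ham, map_one, one_mul]
    have hR : W ((⟨i, m⟩ : Σ i, G i) :: (d :: mid')) = x * of a := by
      rw [hxfac]
      simp only [W_cons, mul_assoc, ← map_mul, haz, map_one, mul_one]
    have heq := eq_lists htail hch2 hnepre hchpre (hL.trans (hcomm.trans hR.symm))
    simp only [List.cons_append, List.cons.injEq] at heq
    exact hdi (congrArg Sigma.fst heq.1)
  · -- only left cancels : lengths differ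
    have hL : W ((d :: mid') ++ [(⟨i, z⟩ : Σ i, G i)]) = of a * x := by
      rw [hxfac, W_append, W_singleton, ← mul_assoc, ← map_mul, ham, map_one, one_mul]
    have hR : W (((⟨i, m⟩ : Σ i, G i) :: (d :: mid')) ++ [(⟨i, z * a⟩ : Σ i, G i)])
        = x * of a := by
      simp only [W_cons, W_append, W_singleton, W_nil, map_mul, mul_assoc, mul_one, hxfac]
    have heq := eq_lists htail hch2
      (List.forall_mem_append.mpr ⟨hnepre, List.forall_mem_singleton.mpr haz⟩)
      (List.isChain_append.mpr ⟨hchpre, List.isChain_singleton _, by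
        intro p hp y hy
        simp only [List.head?_cons, Option.mem_some_iff] at hy
        subst hy
        exact hjunc p hp⟩)
      (hL.trans (hcomm.trans hR.symm))
    have hlen := congrArg List.length heq
    simp at hlen
  · -- only right cancels : lengths differ
    have hL : W ((⟨i, a * m⟩ : Σ i, G i) :: ((d :: mid') ++ [(⟨i, z⟩ : Σ i, G i)]))
        = of a * x := by
      simp only [W_cons, W_append, W_singleton, W_nil, map_mul, mul_assoc, mul_one, hxfac]
    have hR : W ((⟨i, m⟩ : Σ i, G i) :: (d :: mid')) = x * of a := by
      rw [hxfac]
      simp only [W_cons, mul_assoc, ← map_mul, haz, map_one, mul_one]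
    have heq := eq_lists
      (List.forall_mem_cons.mpr ⟨ham, htail⟩)
      (List.isChain_cons.mpr ⟨hch1, hch2⟩)
      hnepre hchpre (hL.trans (hcomm.trans hR.symm))
    have hlen := congrArg List.length heq
    simp at hlen
  · -- no cancellation : compare heads
    have hL : W ((⟨i, a * m⟩ : Σ i, G i) :: ((d :: mid') ++ [(⟨i, z⟩ : Σ i, G i)]))
        = of a * x := by
      simp only [W_cons, W_append, W_singleton, W_nil, map_mul, mul_assoc, mul_one, hxfac]
    have hR : W (((⟨i, m⟩ : Σ i, G i) :: (d :: mid')) ++ [(⟨i, z * a⟩ : Σ i, G i)])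
        = x * of a := by
      simp only [W_cons, W_append, W_singleton, W_nil, map_mul, mul_assoc, mul_one, hxfac]
    have heq := eq_lists
      (List.forall_mem_cons.mpr ⟨ham, htail⟩)
      (List.isChain_cons.mpr ⟨hch1, hch2⟩)
      (List.forall_mem_append.mpr ⟨hnepre, List.forall_mem_singleton.mpr haz⟩)
      (List.isChain_append.mpr ⟨hchpre, List.isChain_singleton _, by
        intro p hp y hy
        simp only [List.head?_cons, Option.mem_some_iff] at hy
        subst hy
        exact hjunc p hp⟩)
      (hL.trans (hcomm.trans hR.symm))
    simp only [List.cons_append, List.cons.injEq] at heq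
    have hml : a * m = m := by simpa using heq.1
    exact ha (by simpa using mul_eq_right.mp hml)

/-- The centralizer of a nontrivial letter is contained in its own factor. -/
theorem lemA {i : ι} (a : G i) (ha : a ≠ 1) (x : CoprodI G)
    (hcomm : of a * x = x * of a) : ∃ y : G i, x = of y := by
  classical
  have hx0 : (Word.equiv (M := G) x).prod = x := (Word.equiv (M := G)).symm_apply_apply x
  obtain ⟨⟨l, hne, hch⟩, hx⟩ : ∃ w : Word G, w.prod = x := ⟨_, hx0⟩
  have hx' : W l = x := hx
  clear hx hx0
  rcases l with _ | ⟨⟨j, m⟩, rest⟩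
  · exact ⟨1, by simp [← hx']⟩
  rcases rest with _ | ⟨q, rest'⟩
  · by_cases hji : j = i
    · subst hji
      refine ⟨m, ?_⟩
      rw [← hx', W_cons, W_nil, mul_one]
    · exfalso
      have hxm : x = of m := by rw [← hx', W_cons, W_nil, mul_one]
      have hm1 : m ≠ 1 := hne ⟨j, m⟩ (by simp)
      have hij : i ≠ j := fun h => hji h.symm
      have h : W ([⟨i, a⟩, ⟨j, m⟩] : List (Σ i, G i)) = W ([⟨j, m⟩, ⟨i, a⟩] : List (Σ i, G i)) := by
        simp only [W_cons, W_nil, mul_one]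
        rw [hxm] at hcomm
        exact hcomm
      have heq := eq_lists (by simp [ha, hm1]) (by simp [List.Chain', hij])
        (by simp [ha, hm1]) (by simp [List.Chain', hji]) h
      simp only [List.cons.injEq] at heq
      exact hji (congrArg Sigma.fst heq.1).symm
  · exfalso
    obtain ⟨mid, ⟨t, z⟩, hsplit⟩ : ∃ mid c, q :: rest' = mid ++ [c] :=
      ⟨(q :: rest').dropLast, (q :: rest').getLast (by simp),
        ((q :: rest').dropLast_append_getLast (by simp)).symm⟩
    rw [hsplit] at hne hch hx'
    by_cases hji : j = i <;> by_cases hti : t = i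
    · subst hji; subst hti
      exact caseD ha hx' hne hch hcomm
    · subst hji
      exact caseB hti ha hx' hne hch hcomm
    · subst hti
      exact caseC hji ha hx' hne hch hcomm
    · exact caseA hji hti ha hx' hne hch hcomm

/-- A conjugate of a nontrivial letter by a letter from another factor
is never a letter of the first factor. -/
theorem lemB {i j : ι} (hij : i ≠ j) (b : G j) (hb : b ≠ 1) (y z : G i)
    (h : of b * of y * (of b)⁻¹ = of z) : y = 1 := by
  classical
  by_contra hy
  by_cases hz : z = 1
  · subst hz
    rw [map_one] at h
    rw [mul_inv_eq_iff_eq_mul, one_mul, mul_eq_left] at h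
    exact hy (of_injective i (by simpa using h))
  · have h' : W ([⟨j, b⟩, ⟨i, y⟩, ⟨j, b⁻¹⟩] : List (Σ i, G i))
        = W ([⟨i, z⟩] : List (Σ i, G i)) := by
      simp only [W_cons, W_nil, mul_one]
      rw [← mul_assoc, map_inv]
      exact h
    have heq := eq_lists (by simp [hb, hy]) (by simp [List.Chain', hij, Ne.symm hij]) (by simp [hz])
      (by simp [List.Chain']) h'
    simp at heq

end CentAux

section Transport

universe u v

variable {G₁ : Type u} {G₂ : Type v} [Group G₁] [Group G₂]

/-- The two-factor family used to realize `Coprod G₁ G₂` inside `CoprodI`. -/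
abbrev CentAux.Fam (G₁ : Type u) (G₂ : Type v) : Bool → Type (max u v) :=
  fun b => cond b (ULift.{v} G₁) (ULift.{u} G₂)

instance : ∀ b, Group (CentAux.Fam G₁ G₂ b) := fun b =>
  match b with
  | true => (inferInstance : Group (ULift G₁))
  | false => (inferInstance : Group (ULift G₂))

namespace CentAux

/-- The canonical map `G₁ ∗ G₂ →* CoprodI (Fam G₁ G₂)`. -/
noncomputable def φ : Coprod G₁ G₂ →* CoprodI (Fam G₁ G₂) :=
  Coprod.lift
    ((of (i := true)).comp (MulEquiv.ulift : ULift.{v} G₁ ≃* G₁).symm.toMonoidHom)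
    ((of (i := false)).comp (MulEquiv.ulift : ULift.{u} G₂ ≃* G₂).symm.toMonoidHom)

/-- The canonical map `CoprodI (Fam G₁ G₂) →* G₁ ∗ G₂`. -/
noncomputable def ψ : CoprodI (Fam G₁ G₂) →* Coprod G₁ G₂ :=
  CoprodI.lift fun b =>
    match b with
    | true => Coprod.inl.comp (MulEquiv.ulift : ULift.{v} G₁ ≃* G₁).toMonoidHom
    | false => Coprod.inr.comp (MulEquiv.ulift : ULift.{u} G₂ ≃* G₂).toMonoidHom

theorem φ_inl (a : G₁) : φ (Coprod.inl a) = of (i := true) (M := Fam G₁ G₂) (ULift.up.{v} a) := by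
  simp [φ, Coprod.lift_apply_inl]
  rfl

theorem φ_inr (b : G₂) : φ (Coprod.inr b) = of (i := false) (M := Fam G₁ G₂) (ULift.up.{u} b) := by
  simp [φ, Coprod.lift_apply_inr]
  rfl

theorem ψ_of_true (u : ULift.{v} G₁) :
    ψ (of (i := true) (M := Fam G₁ G₂) u) = Coprod.inl u.down := by
  rw [ψ, CoprodI.lift_of]
  rfl

theorem ψ_of_false (u : ULift.{u} G₂) :
    ψ (of (i := false) (M := Fam G₁ G₂) u) = Coprod.inr u.down := by
  rw [ψ, CoprodI.lift_of]
  rfl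

theorem ψ_φ (x : Coprod G₁ G₂) : ψ (φ x) = x := by
  have h : (ψ.comp (φ : Coprod G₁ G₂ →* CoprodI (Fam G₁ G₂))) = MonoidHom.id _ := by
    apply Coprod.hom_ext <;> ext a
    · rw [MonoidHom.comp_apply, MonoidHom.comp_apply, φ_inl, ψ_of_true]
      rfl
    · rw [MonoidHom.comp_apply, MonoidHom.comp_apply, φ_inr, ψ_of_false]
      rfl
  exact DFunLike.congr_fun h x

theorem lemA_coprod (a : G₁) (ha : a ≠ 1) (x : Coprod G₁ G₂)
    (h : Coprod.inl a * x = x * Coprod.inl a) : ∃ y : G₁, x = Coprod.inl y := by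
  classical
  have h' : of (i := true) (M := Fam G₁ G₂) (ULift.up.{v} a) * φ x
      = φ x * of (i := true) (M := Fam G₁ G₂) (ULift.up.{v} a) := by
    have h2 := congrArg φ h
    simpa only [map_mul, φ_inl] using h2
  obtain ⟨y, hy⟩ := lemA (G := Fam G₁ G₂) (i := true) (ULift.up.{v} a)
    (fun hc => ha (congrArg ULift.down hc)) (φ x) h'
  refine ⟨y.down, ?_⟩
  have h3 := congrArg ψ hy
  rw [ψ_φ] at h3
  rw [h3, ψ_of_true]

theorem lemB_coprod (b : G₂) (hb : b ≠ 1) (y z : G₁)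
    (h : Coprod.inr b * Coprod.inl y * (Coprod.inr b)⁻¹ = Coprod.inl z) : y = 1 := by
  classical
  have h' : of (i := false) (M := Fam G₁ G₂) (ULift.up.{u} b)
      * of (i := true) (M := Fam G₁ G₂) (ULift.up.{v} y)
      * (of (i := false) (M := Fam G₁ G₂) (ULift.up.{u} b))⁻¹
      = of (i := true) (M := Fam G₁ G₂) (ULift.up.{v} z) := by
    have h2 := congrArg φ h
    simpa only [map_mul, map_inv, φ_inl, φ_inr] using h2
  have := lemB (i := true) (j := false) (G := Fam G₁ G₂) (by simp)
    (ULift.up.{u} b) (fun hc => hb (congrArg ULift.down hc)) (ULift.up.{v} y) (ULift.up.{v} z) h'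
  exact congrArg ULift.down this

end CentAux

end Transport

/-- Let `G₁` be an infinite group and `G₂` a nontrivial group. Then for every
element `g ≠ 1` of the free product `G₁ ∗ G₂` (`Monoid.Coprod G₁ G₂`), the centralizer of `g`
is a subgroup of infinite index. -/
theorem centralizer_infinite_index_coprod
    (G₁ G₂ : Type*) [Group G₁] [Group G₂] [Infinite G₁] [Nontrivial G₂]
    (g : Coprod G₁ G₂) (hg : g ≠ 1) :
    (Subgroup.centralizer ({g} : Set (Coprod G₁ G₂))).index = 0 := by
  by_contra h0
  haveI hfi : (Subgroup.centralizer ({g} : Set (Coprod G₁ G₂))).FiniteIndex := ⟨h0⟩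
  set C := Subgroup.centralizer ({g} : Set (Coprod G₁ G₂)) with hC
  set N := C.normalCore with hNdef
  haveI hNfi : N.FiniteIndex := Subgroup.finiteIndex_normalCore C
  -- the pullback of `N` to `G₁` is nontrivial
  have hKind : (N.comap (Coprod.inl : G₁ →* Coprod G₁ G₂)).index ≠ 0 := by
    rw [Subgroup.index_comap]
    intro hzero
    have hdvd := Subgroup.relIndex_dvd_index_of_normal (H := N)
      (K := (Coprod.inl : G₁ →* Coprod G₁ G₂).range)
    rw [hzero] at hdvd
    exact hNfi.index_ne_zero (zero_dvd_iff.mp hdvd)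
  have hKne : N.comap (Coprod.inl : G₁ →* Coprod G₁ G₂) ≠ ⊥ := by
    intro hb
    rw [hb, Subgroup.index_bot, Nat.card_eq_zero_of_infinite] at hKind
    exact hKind rfl
  obtain ⟨⟨a, haK⟩, hane⟩ := Subgroup.ne_bot_iff_exists_ne_one.mp hKne
  have ha1 : a ≠ 1 := fun h => hane (Subtype.ext h)
  have haN : Coprod.inl a ∈ N := haK
  obtain ⟨b, hb1⟩ := exists_ne (1 : G₂)
  -- `g` commutes with `inl a`
  have hcomm1 : Coprod.inl a * g = g * Coprod.inl a := by
    have hmem : Coprod.inl a ∈ C := C.normalCore_le haN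
    exact (Subgroup.mem_centralizer_iff.mp hmem g (Set.mem_singleton g)).symm
  obtain ⟨y, hy⟩ := CentAux.lemA_coprod a ha1 g hcomm1
  -- `g` also commutes with the conjugate of `inl a` by `inr b`
  have haN2 : Coprod.inr b * Coprod.inl a * (Coprod.inr b)⁻¹ ∈ N :=
    Subgroup.normalCore_normal C |>.conj_mem _ haN _
  have hcomm2 : (Coprod.inr b * Coprod.inl a * (Coprod.inr b)⁻¹) * g
      = g * (Coprod.inr b * Coprod.inl a * (Coprod.inr b)⁻¹) := by
    have hmem : Coprod.inr b * Coprod.inl a * (Coprod.inr b)⁻¹ ∈ C := C.normalCore_le haN2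
    exact (Subgroup.mem_centralizer_iff.mp hmem g (Set.mem_singleton g)).symm
  -- hence `(inr b)⁻¹ * g * inr b` commutes with `inl a`
  have hcomm3 : Coprod.inl a * ((Coprod.inr b)⁻¹ * g * Coprod.inr b)
      = ((Coprod.inr b)⁻¹ * g * Coprod.inr b) * Coprod.inl a := by
    calc Coprod.inl a * ((Coprod.inr b)⁻¹ * g * Coprod.inr b)
        = (Coprod.inr b)⁻¹ * (Coprod.inr b * Coprod.inl a * (Coprod.inr b)⁻¹ * g)
            * Coprod.inr b := by group
      _ = (Coprod.inr b)⁻¹ * (g * (Coprod.inr b * Coprod.inl a * (Coprod.inr b)⁻¹))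
            * Coprod.inr b := by rw [hcomm2]
      _ = ((Coprod.inr b)⁻¹ * g * Coprod.inr b) * Coprod.inl a := by group
  obtain ⟨y', hy'⟩ := CentAux.lemA_coprod a ha1 _ hcomm3
  have hconj : Coprod.inr b * Coprod.inl y' * (Coprod.inr b)⁻¹ = Coprod.inl y := by
    rw [← hy', ← hy]
    group
  have hy'1 : y' = 1 := CentAux.lemB_coprod b hb1 y' y hconj
  rw [hy'1] at hy'
  simp only [map_one] at hy'
  apply hg
  have h4 : g = Coprod.inr b * 1 * (Coprod.inr b)⁻¹ := by rw [← hy']; group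
  simpa using h4
end

section
/- Let G₁ and G₂ be groups and let y be the image in the free product G₁ ∗ G₂ of a nontrivial element of G₁ under the canonical injection inl. If x is an element of G₁ ∗ G₂ that is not in the image of inl, then x and y do not commute, i.e., x·y ≠ y·x. -/
open Monoid

namespace FreeProdAux

open Monoid.CoprodI Monoid.CoprodI.Word

section Indexed

variable {ι : Type*} [DecidableEq ι] {G : ι → Type*} [∀ i, Group (G i)]
  [∀ i, DecidableEq (G i)]

lemma smul_eq_cons {j : ι} (m : G j) (hm : m ≠ 1) (v : Word G) (hv : v.fstIdx ≠ some j) :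
    of m • v = cons m v hv hm :=
  cons_eq_smul.symm

omit [DecidableEq ι] [∀ i, DecidableEq (G i)] in
lemma fstIdx_empty : (Word.empty : Word G).fstIdx = none := rfl

lemma prod_smul_empty (t : Word G) : Word.prod t • (Word.empty : Word G) = t :=
  Word.equiv.apply_symm_apply t

lemma fstIdx_prod_smul_single {i : ι} (a : G i) (ha : a ≠ 1) :
    ∀ t : Word G, t ≠ .empty →
      (Word.prod t • (of a • (Word.empty : Word G))).fstIdx = t.fstIdx ∨
        (t.fstIdx = some i ∧ Word.prod t • (of a • (Word.empty : Word G)) = .empty) := by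
  intro t
  induction t using Word.consRecOn with
  | empty => intro h; exact absurd rfl h
  | cons j m t' h1 h2 ih =>
    intro _
    rw [prod_cons, mul_smul]
    by_cases ht' : t' = .empty
    · subst ht'
      rw [prod_empty, one_smul]
      by_cases hji : j = i
      · subst hji
        rw [← mul_smul, ← MonoidHom.map_mul]
        by_cases hma : m * a = 1
        · right
          refine ⟨by rw [fstIdx_cons], ?_⟩
          rw [hma, MonoidHom.map_one, one_smul]
        · left
          rw [smul_eq_cons (m * a) hma Word.empty (by rw [fstIdx_empty]; exact (Option.some_ne_none _).symm),
            fstIdx_cons, fstIdx_cons]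
      · left
        have hsing : (of a • (Word.empty : Word G)).fstIdx = some i := by
          rw [smul_eq_cons a ha Word.empty (by rw [fstIdx_empty]; exact (Option.some_ne_none _).symm), fstIdx_cons]
        rw [smul_eq_cons m h2 _
          (by rw [hsing]; exact fun hc => hji (Option.some.inj hc).symm),
          fstIdx_cons, fstIdx_cons]
    · left
      rcases ih ht' with hih | ⟨hidx, hemp⟩
      · have hne : (Word.prod t' • (of a • (Word.empty : Word G))).fstIdx ≠ some j := by
          rw [hih]; exact h1
        rw [smul_eq_cons m h2 _ hne, fstIdx_cons, fstIdx_cons]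
      · rw [hemp, smul_eq_cons m h2 Word.empty (by rw [fstIdx_empty]; exact (Option.some_ne_none _).symm),
          fstIdx_cons, fstIdx_cons]

lemma mem_range_of_commute {i : ι} (a : G i) (ha : a ≠ 1) (x : CoprodI G)
    (h : x * of a = of a * x) : ∃ g : G i, x = of g := by
  set w : Word G := Word.equiv x with hw
  set p := equivPair i w with hp
  have hrw : rcons p = w := (equivPair i).symm_apply_apply w
  have hxw : of p.head * Word.prod p.tail = x := by
    have h1 : Word.prod (rcons p) = of p.head * Word.prod p.tail := prod_rcons p
    rw [hrw] at h1
    have h2 : Word.prod w = x := Word.equiv.symm_apply_apply x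
    rw [h2] at h1
    exact h1.symm
  by_cases ht : p.tail = .empty
  · exact ⟨p.head, by rw [← hxw, ht, prod_empty, mul_one]⟩
  · exfalso
    set a' : G i := p.head⁻¹ * a * p.head with ha'def
    have ha'1 : a' ≠ 1 := by
      intro hc
      apply ha
      have := congrArg (fun g => p.head * g * p.head⁻¹) hc
      simpa [ha'def, mul_assoc] using this
    have key : Word.prod p.tail * of a = of a' * Word.prod p.tail := by
      have h' : of p.head * Word.prod p.tail * of a
          = of a * (of p.head * Word.prod p.tail) := by
        rw [hxw]; exact h
      have hmid : Word.prod p.tail * of a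
          = (of p.head)⁻¹ * of a * of p.head * Word.prod p.tail := by
        have := congrArg (fun z => (of p.head)⁻¹ * z) h'
        simpa [mul_assoc] using this
      rw [hmid, ha'def]
      simp [mul_assoc]
    have hEq : Word.prod p.tail • (of a • (Word.empty : Word G)) = of a' • p.tail := by
      have := congrArg (fun g => g • (Word.empty : Word G)) key
      simpa [mul_smul, prod_smul_empty] using this
    have h1 : (of a' • p.tail).fstIdx = some i := by
      rw [smul_eq_cons a' ha'1 _ p.fstIdx_ne, fstIdx_cons]
    rcases fstIdx_prod_smul_single a ha p.tail ht with h2 | ⟨h2, _⟩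
    · rw [hEq, h1] at h2
      exact p.fstIdx_ne h2.symm
    · exact p.fstIdx_ne h2

end Indexed

section Binary

universe u

variable {G₁ G₂ : Type u} [Group G₁] [Group G₂]

/-- The family of two groups indexed by `Bool`. -/
abbrev pairFam (G₁ G₂ : Type u) : Bool → Type u := fun b => cond b G₁ G₂

instance (b : Bool) : Group (pairFam G₁ G₂ b) := by
  cases b <;> dsimp [pairFam] <;> infer_instance

/-- Map from the binary coproduct to the indexed coproduct. -/
def toI : Coprod G₁ G₂ →* CoprodI (pairFam G₁ G₂) :=
  Coprod.lift (CoprodI.of : pairFam G₁ G₂ true →* CoprodI (pairFam G₁ G₂))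
    (CoprodI.of : pairFam G₁ G₂ false →* CoprodI (pairFam G₁ G₂))

/-- Map from the indexed coproduct to the binary coproduct. -/
def ofI : CoprodI (pairFam G₁ G₂) →* Coprod G₁ G₂ :=
  CoprodI.lift (fun b => Bool.rec (motive := fun b => pairFam G₁ G₂ b →* Coprod G₁ G₂)
    Coprod.inr Coprod.inl b)

lemma ofI_toI (x : Coprod G₁ G₂) : ofI (toI x) = x := by
  have key : ((ofI.comp (toI : Coprod G₁ G₂ →* _))) = MonoidHom.id _ := by
    apply Coprod.hom_ext
    · ext g
      show ofI (toI (Coprod.inl g)) = Coprod.inl g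
      rw [show toI (Coprod.inl g) = CoprodI.of (i := (true : Bool)) g from rfl]
      rw [show ofI (CoprodI.of (i := (true : Bool)) g)
        = (Coprod.inl : G₁ →* Coprod G₁ G₂) g from Monoid.CoprodI.lift_of _ _]
    · ext g
      show ofI (toI (Coprod.inr g)) = Coprod.inr g
      rw [show toI (Coprod.inr g) = CoprodI.of (i := (false : Bool)) g from rfl]
      rw [show ofI (CoprodI.of (i := (false : Bool)) g)
        = (Coprod.inr : G₂ →* Coprod G₁ G₂) g from Monoid.CoprodI.lift_of _ _]
  calc ofI (toI x) = (ofI.comp toI) x := rfl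
    _ = x := by rw [key]; rfl

lemma mem_inl_range_of_commute (a : G₁) (ha : a ≠ 1) (x : Coprod G₁ G₂)
    (h : x * Coprod.inl a = Coprod.inl a * x) :
    x ∈ (Coprod.inl : G₁ →* Coprod G₁ G₂).range := by
  classical
  have hcomm : toI x * CoprodI.of (i := (true : Bool)) a
      = CoprodI.of (i := (true : Bool)) a * toI x := by
    have := congrArg toI h
    simpa [toI, map_mul] using this
  obtain ⟨g, hg⟩ := mem_range_of_commute (i := (true : Bool)) a ha (toI x) hcomm
  refine ⟨g, ?_⟩
  have h1 : ofI (toI x) = ofI (CoprodI.of (i := (true : Bool)) g) := by rw [hg]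
  rw [ofI_toI] at h1
  have h2 : ofI (CoprodI.of (i := (true : Bool)) g) = Coprod.inl g :=
    Monoid.CoprodI.lift_of _ _
  rw [h2] at h1
  exact h1.symm

end Binary

end FreeProdAux

/-- Let `G₁`, `G₂` be groups and `y = inl a` the image in the free product
`G₁ ∗ G₂` of a nontrivial element `a` of `G₁`. If `x ∈ G₁ ∗ G₂` is not in the image of `inl`,
then `x` and `y` do not commute. -/
theorem not_commute_of_not_mem_inl_range
    (G₁ G₂ : Type*) [Group G₁] [Group G₂] (a : G₁) (ha : a ≠ 1)
    (x : Coprod G₁ G₂)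
    (hx : x ∉ (Coprod.inl : G₁ →* Coprod G₁ G₂).range) :
    x * Coprod.inl a ≠ Coprod.inl a * x := by
  intro h
  apply hx
  -- transfer to a common universe via `ULift`
  let e₁ : G₁ ≃* ULift.{max u_1 u_2} G₁ := MulEquiv.ulift.symm
  let e₂ : G₂ ≃* ULift.{max u_1 u_2} G₂ := MulEquiv.ulift.symm
  let θ : Coprod G₁ G₂ →* Coprod (ULift.{max u_1 u_2} G₁) (ULift.{max u_1 u_2} G₂) :=
    Coprod.map e₁.toMonoidHom e₂.toMonoidHom
  let θ' : Coprod (ULift.{max u_1 u_2} G₁) (ULift.{max u_1 u_2} G₂) →* Coprod G₁ G₂ :=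
    Coprod.map e₁.symm.toMonoidHom e₂.symm.toMonoidHom
  have hθ' : ∀ y, θ' (θ y) = y := by
    intro y
    show Coprod.map _ _ (Coprod.map _ _ y) = y
    rw [Coprod.map_map]
    have h1 : (e₁.symm.toMonoidHom.comp e₁.toMonoidHom) = MonoidHom.id G₁ := by
      ext g; simp
    have h2 : (e₂.symm.toMonoidHom.comp e₂.toMonoidHom) = MonoidHom.id G₂ := by
      ext g; simp
    rw [h1, h2, Coprod.map_id_id]
    rfl
  have ha' : e₁ a ≠ 1 := fun hc => ha (by simpa using e₁.injective (by simpa using hc))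
  have hcomm : θ x * Coprod.inl (e₁ a) = Coprod.inl (e₁ a) * θ x := by
    have := congrArg θ h
    simpa [θ, map_mul, Coprod.map_apply_inl] using this
  obtain ⟨g, hg⟩ := FreeProdAux.mem_inl_range_of_commute (e₁ a) ha' (θ x) hcomm
  refine ⟨e₁.symm g, ?_⟩
  have h1 : θ' (θ x) = θ' (Coprod.inl g) := by rw [hg]
  rw [hθ'] at h1
  rw [Coprod.map_apply_inl] at h1
  exact h1.symm
end

section
/- Let (G_i)_{i∈I} be a family of groups, let i ∈ I, and let a be a nontrivial element of G_i. If x is an element of the free product ∗_{i∈I} G_i that is not in the range of the canonical injection of_i : G_i → ∗_{i∈I} G_i, then x does not commute with of_i(a), i.e., x·of_i(a) ≠ of_i(a)·x. -/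
open Monoid

namespace CoprodINotCommuteAux

open Monoid.CoprodI

variable {I : Type*} {G : I → Type*} [∀ i, Group (G i)]

theorem inv_toList_length {i j : I} (w : NeWord G i j) :
    w.inv.toList.length = w.toList.length := by
  induction w with
  | singleton => rfl
  | append w₁ h w₂ ih₁ ih₂ => simp [NeWord.inv, ih₁, ih₂, Nat.add_comm]

variable [DecidableEq I] [∀ i, DecidableEq (G i)]

theorem equiv_prod (w : Word G) : Word.equiv w.prod = w :=
  Word.equiv.apply_symm_apply w

theorem prod_equiv (y : CoprodI G) : (Word.equiv y).prod = y :=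
  Word.equiv.symm_apply_apply y

theorem eq_one_of_toList_eq_nil {y : CoprodI G} (h : (Word.equiv y).toList = []) :
    y = 1 := by
  have h2 : Word.equiv y = Word.empty := Word.ext h
  have := prod_equiv y
  rw [h2, Word.prod_empty] at this
  exact this.symm

theorem neword_prod_ne_one {i j : I} (w : NeWord G i j) : w.prod ≠ 1 := by
  intro h
  have h2 : Word.equiv w.toWord.prod = w.toWord := equiv_prod _
  have h3 : w.toWord.prod = w.prod := rfl
  rw [h3, h] at h2
  have h4 : Word.equiv (1 : CoprodI G) = Word.empty := by
    simpa using equiv_prod (Word.empty : Word G)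
  rw [h4] at h2
  exact w.toList_ne_nil (by rw [show w.toList = w.toWord.toList from rfl, ← h2]; rfl)

theorem strip {i : I} {y : CoprodI G} {g : G i} {t : List (Σ i, G i)}
    (h : (Word.equiv y).toList = ⟨i, g⟩ :: t) :
    ∃ y' : CoprodI G, y = CoprodI.of g * y' ∧ (Word.equiv y').toList = t := by
  have hne : ∀ l ∈ t, Sigma.snd l ≠ 1 := fun l hl =>
    (Word.equiv y).ne_one l (by rw [h]; exact List.mem_cons_of_mem _ hl)
  have hch' := (Word.equiv y).chain_ne
  rw [h, List.isChain_cons] at hch'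
  let tw : Word G := ⟨t, hne, hch'.2⟩
  have h1 : tw.fstIdx ≠ some i := by
    rw [Word.fstIdx_ne_iff]
    intro l hl
    exact hch'.1 l hl
  have h2 : g ≠ 1 :=
    (Word.equiv y).ne_one ⟨i, g⟩ (by rw [h]; exact List.mem_cons_self)
  have hwc : Word.equiv y = Word.cons g tw h1 h2 := Word.ext (by rw [h]; rfl)
  refine ⟨tw.prod, ?_, by rw [equiv_prod]⟩
  have := prod_equiv y
  rw [hwc, Word.prod_cons] at this
  exact this.symm

theorem mem_range_of_conj {i : I} : ∀ (n : ℕ) (y : CoprodI G) (b c : G i), b ≠ 1 →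
    y * CoprodI.of b * y⁻¹ = CoprodI.of c →
    (Word.equiv y).toList.length ≤ n →
    y ∈ (CoprodI.of : G i →* CoprodI G).range := by
  intro n
  induction n with
  | zero =>
    intro y b c hb heq hlen
    have hy : y = 1 := eq_one_of_toList_eq_nil (List.length_eq_zero_iff.mp (Nat.le_zero.mp hlen))
    exact ⟨1, by simp [hy]⟩
  | succ n ih =>
    intro y b c hb heq hlen
    have hc : c ≠ 1 := by
      intro hc1
      apply hb
      apply CoprodI.of_injective i
      have hob : CoprodI.of b = y⁻¹ * (y * CoprodI.of b * y⁻¹) * y := by group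
      rw [map_one, hob, heq, hc1, map_one]
      group
    rcases hl : (Word.equiv y).toList with _ | ⟨⟨j, g⟩, tl⟩
    · exact ⟨1, by simp [eq_one_of_toList_eq_nil hl]⟩
    by_cases hji : j = i
    · subst hji
      obtain ⟨y', rfl, ht⟩ := strip hl
      have heq' : y' * CoprodI.of b * y'⁻¹ = CoprodI.of (g⁻¹ * c * g) := by
        have key : y' * CoprodI.of b * y'⁻¹ =
            (CoprodI.of g)⁻¹ * (CoprodI.of g * y' * CoprodI.of b * (CoprodI.of g * y')⁻¹) *
              CoprodI.of g := by group
        rw [key, heq, map_mul, map_mul, map_inv]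
      have hlen' : (Word.equiv y').toList.length ≤ n := by
        rw [ht]
        have := hlen
        rw [hl] at this
        simpa using this
      obtain ⟨z, hz⟩ := ih y' b (g⁻¹ * c * g) hb heq' hlen'
      exact ⟨g * z, by rw [map_mul, hz]⟩
    · -- head index ≠ i
      have hwne : Word.equiv y ≠ Word.empty := by
        intro hemp
        rw [hemp] at hl
        exact (List.cons_ne_nil _ _ hl.symm).elim
      obtain ⟨j', k, nw, hnw⟩ := NeWord.of_word (Word.equiv y) hwne
      have hnwlist : nw.toList = (Word.equiv y).toList := by rw [← hnw]; rfl
      have hnwprod : nw.prod = y := by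
        rw [show nw.prod = nw.toWord.prod from rfl, hnw, prod_equiv]
      have hj' : j' = j := by
        have h0 := nw.toList_head?
        rw [hnwlist, hl] at h0
        simp only [List.head?_cons, Option.some.injEq, Sigma.mk.inj_iff] at h0
        exact h0.1.symm
      by_cases hki : k = i
      · -- strip from the left of y⁻¹
        subst hki
        have hyinv : y⁻¹ = nw.inv.prod := by rw [NeWord.inv_prod, hnwprod]
        have hinvlist : (Word.equiv y⁻¹).toList = nw.inv.toList := by
          rw [hyinv, show nw.inv.prod = nw.inv.toWord.prod from rfl, equiv_prod]; rfl
        rcases hil : nw.inv.toList with _ | ⟨⟨j₂, g₂⟩, tl₂⟩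
        · exact (nw.inv.toList_ne_nil hil).elim
        have hj₂ : k = j₂ := by
          have h0 := nw.inv.toList_head?
          rw [hil] at h0
          simp only [List.head?_cons, Option.some.injEq, Sigma.mk.inj_iff] at h0
          exact h0.1.symm
        subst hj₂
        have hlist2 : (Word.equiv y⁻¹).toList = ⟨k, g₂⟩ :: tl₂ := by rw [hinvlist, hil]
        obtain ⟨z, hz, htz⟩ := strip hlist2
        have heqinv : y⁻¹ * CoprodI.of c * (y⁻¹)⁻¹ = CoprodI.of b := by
          rw [← heq]; group
        rw [hz] at heqinv
        have heqz : z * CoprodI.of c * z⁻¹ = CoprodI.of (g₂⁻¹ * b * g₂) := by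
          have key : z * CoprodI.of c * z⁻¹ =
              (CoprodI.of g₂)⁻¹ * (CoprodI.of g₂ * z * CoprodI.of c *
                (CoprodI.of g₂ * z)⁻¹) * CoprodI.of g₂ := by group
          rw [key, heqinv, map_mul, map_mul, map_inv]
        have hg₂b : g₂⁻¹ * b * g₂ ≠ 1 := by
          intro h1
          apply hb
          have hb2 : b = g₂ * (g₂⁻¹ * b * g₂) * g₂⁻¹ := by group
          rw [hb2, h1]
          group
        have hlenz : (Word.equiv z).toList.length ≤ n := by
          rw [htz]
          have h5 : (⟨k, g₂⟩ :: tl₂).length = nw.toList.length := by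
            rw [← hil, inv_toList_length]
          rw [hnwlist, hl] at h5
          have h6 := hlen
          rw [hl] at h6
          simp only [List.length_cons] at h5 h6
          omega
        obtain ⟨z', hz'⟩ := ih z c (g₂⁻¹ * b * g₂)
          (fun hc1 => hc hc1) heqz hlenz
        refine ⟨(g₂ * z')⁻¹, ?_⟩
        rw [map_inv, map_mul, hz', ← hz]
        group
      · -- both ends avoid i : contradiction via a nonempty reduced word with product 1
        have hji' : j' ≠ i := hj' ▸ hji
        have hki' : i ≠ k := fun h => hki h.symm
        let big : NeWord G j' i :=
          NeWord.append
            (NeWord.append (NeWord.append nw hki (NeWord.singleton b hb)) hki' nw.inv)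
            hji' (NeWord.singleton c⁻¹ (inv_ne_one.mpr hc))
        have hbig : big.prod = 1 := by
          simp only [big, NeWord.append_prod, NeWord.prod_singleton, NeWord.inv_prod,
            hnwprod, map_inv]
          rw [heq]
          group
        exact (neword_prod_ne_one big hbig).elim

end CoprodINotCommuteAux

/-- Let `(G i)_{i ∈ I}` be a family of groups, `i ∈ I`, and `a` a nontrivial
element of `G i`. If `x` is an element of the free product `∗_{i ∈ I} G i` that is not in the
range of the canonical injection `of : G i →* ∗_{i ∈ I} G i`, then `x` does not commute with
`of a`. -/
theorem not_commute_of_not_mem_of_range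
    {I : Type*} (G : I → Type*) [∀ i, Group (G i)] (i : I) (a : G i) (ha : a ≠ 1)
    (x : CoprodI G)
    (hx : x ∉ (CoprodI.of : G i →* CoprodI G).range) :
    x * CoprodI.of a ≠ CoprodI.of a * x := by
  classical
  intro hcomm
  apply hx
  refine CoprodINotCommuteAux.mem_range_of_conj ((Monoid.CoprodI.Word.equiv x).toList.length)
    x a a ha ?_ le_rfl
  rw [hcomm]
  group
end

section
/- Let G₁ and G₂ be groups and let a be a nontrivial element of G₁. Then the centralizer of inl(a) in the free product G₁ ∗ G₂ is contained in the image of the canonical injection inl : G₁ → G₁ ∗ G₂. -/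
open Monoid Monoid.CoprodI

section Aux

variable {ι : Type*} [DecidableEq ι] {G : ι → Type*} [∀ i, Group (G i)]

private def plist (L : List (Σ i, G i)) : CoprodI G :=
  (L.map fun p => of p.2).prod

private theorem plist_nil : plist ([] : List (Σ i, G i)) = 1 := rfl

private theorem plist_cons (p : Σ i, G i) (L : List (Σ i, G i)) :
    plist (p :: L) = of p.2 * plist L := by simp [plist]

private theorem plist_append (L L' : List (Σ i, G i)) :
    plist (L ++ L') = plist L * plist L' := by simp [plist]

private theorem word_list_eq {l₁ l₂ : List (Σ i, G i)}
    (ne₁ : ∀ p ∈ l₁, p.2 ≠ 1) (ch₁ : l₁.IsChain fun p q => p.1 ≠ q.1)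
    (ne₂ : ∀ p ∈ l₂, p.2 ≠ 1) (ch₂ : l₂.IsChain fun p q => p.1 ≠ q.1)
    (h : plist l₁ = plist l₂) : l₁ = l₂ := by
  classical
  have h' : (Word.equiv (M := G)).symm ⟨l₁, ne₁, ch₁⟩ =
      (Word.equiv (M := G)).symm ⟨l₂, ne₂, ch₂⟩ := h
  exact congrArg Word.toList ((Word.equiv (M := G)).symm.injective h')

private theorem key {i : ι} {a : G i} (ha : a ≠ 1) {x : CoprodI G}
    (hx : of a * x = x * of a) : ∃ g : G i, x = of g := by
  classical
  rcases hw : Word.equiv x with ⟨l, hne, hch⟩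
  have hxl : plist l = x := by
    have h := (Word.equiv (M := G)).symm_apply_apply x
    rw [hw] at h
    exact h
  clear hw
  rcases l with _ | ⟨⟨j, g⟩, t⟩
  · exact ⟨1, by rw [← hxl]; simp [plist]⟩
  by_cases hji : j = i
  · subst j
    by_cases ht : t = []
    · subst ht
      exact ⟨g, by rw [← hxl]; simp [plist]⟩
    · -- t ≠ [], first index is i
      rcases List.eq_nil_or_concat' t with rfl | ⟨r, ⟨k, g'⟩, rfl⟩
      · exact absurd rfl ht
      by_cases hki : k = i
      · -- case (d): both ends have index i
        subst k
        have hhead : ∀ y ∈ (r ++ [(⟨i, g'⟩ : Σ i, G i)]).head?, i ≠ y.1 :=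
          (List.isChain_cons.mp hch).1
        have hxt' : x = plist ((⟨i, g⟩ : Σ i, G i) :: r) * of g' := by
          rw [← hxl]; simp [plist, mul_assoc]
        by_cases hag : a * g = 1
        · by_cases hga : g' * a = 1
          · -- both cancel
            have heq : r ++ [(⟨i, g'⟩ : Σ i, G i)] = ⟨i, g⟩ :: r := by
              refine word_list_eq ?_ ?_ ?_ ?_ ?_
              · intro p hp; exact hne p (List.mem_cons_of_mem _ hp)
              · exact (List.isChain_cons.mp hch).2
              · intro p hp
                rcases List.mem_cons.mp hp with rfl | hp
                · exact hne _ (List.mem_cons_self)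
                · exact hne p (List.mem_cons_of_mem _ (List.mem_append_left _ hp))
              · refine List.isChain_cons.mpr ⟨?_, ?_⟩
                · intro y hy
                  apply hhead
                  rcases r with _ | ⟨q, r'⟩
                  · simp at hy
                  · simpa using hy
                · exact ((List.isChain_cons.mp hch).2).prefix (List.prefix_append _ _)
              · have h1 : of a * x = plist (r ++ [(⟨i, g'⟩ : Σ i, G i)]) := by
                  rw [← hxl, plist_cons, ← mul_assoc, ← map_mul, hag, map_one, one_mul]
                have h2 : x * of a = plist ((⟨i, g⟩ : Σ i, G i) :: r) := by
                  rw [hxt', mul_assoc, ← map_mul, hga, map_one, mul_one]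
                rw [← h1, ← h2, hx]
            exact absurd rfl (hhead ⟨i, g⟩ (by rw [heq]; simp))
          · -- a*g = 1, g'*a ≠ 1 : length mismatch
            have heq : r ++ [(⟨i, g'⟩ : Σ i, G i)] = (⟨i, g⟩ :: r) ++ [⟨i, g' * a⟩] := by
              refine word_list_eq ?_ ?_ ?_ ?_ ?_
              · intro p hp; exact hne p (List.mem_cons_of_mem _ hp)
              · exact (List.isChain_cons.mp hch).2
              · intro p hp
                rcases List.mem_append.mp hp with hp | hp
                · rcases List.mem_cons.mp hp with rfl | hp
                  · exact hne _ (List.mem_cons_self)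
                  · exact hne p (List.mem_cons_of_mem _ (List.mem_append_left _ hp))
                · simp at hp; subst hp; exact hga
              · have h3 := hch
                rw [← List.cons_append] at h3
                rw [List.isChain_append] at h3 ⊢
                refine ⟨h3.1, List.isChain_singleton _, ?_⟩
                intro p hp q hq
                simp at hq
                subst hq
                exact fun hfst => h3.2.2 p hp ⟨i, g'⟩ (by simp) hfst
              · have h1 : of a * x = plist (r ++ [(⟨i, g'⟩ : Σ i, G i)]) := by
                  rw [← hxl, plist_cons, ← mul_assoc, ← map_mul, hag, map_one, one_mul]
                have h2 : x * of a = plist ((⟨i, g⟩ :: r) ++ [(⟨i, g' * a⟩ : Σ i, G i)]) := by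
                  rw [← hxl]
                  simp [plist, map_mul, mul_assoc]
                rw [← h1, ← h2, hx]
            have hlen := congrArg List.length heq
            simp at hlen
        · by_cases hga : g' * a = 1
          · -- a*g ≠ 1, g'*a = 1 : length mismatch
            have heq : (⟨i, a * g⟩ : Σ i, G i) :: (r ++ [⟨i, g'⟩]) = ⟨i, g⟩ :: r := by
              refine word_list_eq ?_ ?_ ?_ ?_ ?_
              · intro p hp
                rcases List.mem_cons.mp hp with rfl | hp
                · exact hag
                · exact hne p (List.mem_cons_of_mem _ hp)
              · exact List.isChain_cons.mpr
                  ⟨(List.isChain_cons.mp hch).1, (List.isChain_cons.mp hch).2⟩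
              · intro p hp
                rcases List.mem_cons.mp hp with rfl | hp
                · exact hne _ (List.mem_cons_self)
                · exact hne p (List.mem_cons_of_mem _ (List.mem_append_left _ hp))
              · refine List.isChain_cons.mpr ⟨?_, ?_⟩
                · intro y hy
                  apply (List.isChain_cons.mp hch).1
                  rcases r with _ | ⟨q, r'⟩
                  · simp at hy
                  · simpa using hy
                · exact ((List.isChain_cons.mp hch).2).prefix (List.prefix_append _ _)
              · have h1 : of a * x =
                    plist ((⟨i, a * g⟩ : Σ i, G i) :: (r ++ [⟨i, g'⟩])) := by
                  rw [← hxl]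
                  simp [plist, map_mul, mul_assoc]
                have h2 : x * of a = plist ((⟨i, g⟩ : Σ i, G i) :: r) := by
                  rw [hxt', mul_assoc, ← map_mul, hga, map_one, mul_one]
                rw [← h1, ← h2, hx]
            have hlen := congrArg List.length heq
            simp at hlen
          · -- neither cancels: heads give a * g = g
            have heq : (⟨i, a * g⟩ : Σ i, G i) :: (r ++ [⟨i, g'⟩]) =
                (⟨i, g⟩ :: r) ++ [⟨i, g' * a⟩] := by
              refine word_list_eq ?_ ?_ ?_ ?_ ?_
              · intro p hp
                rcases List.mem_cons.mp hp with rfl | hp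
                · exact hag
                · exact hne p (List.mem_cons_of_mem _ hp)
              · exact List.isChain_cons.mpr
                  ⟨(List.isChain_cons.mp hch).1, (List.isChain_cons.mp hch).2⟩
              · intro p hp
                rcases List.mem_append.mp hp with hp | hp
                · rcases List.mem_cons.mp hp with rfl | hp
                  · exact hne _ (List.mem_cons_self)
                  · exact hne p (List.mem_cons_of_mem _ (List.mem_append_left _ hp))
                · simp at hp; subst hp; exact hga
              · have h3 := hch
                rw [← List.cons_append] at h3
                rw [List.isChain_append] at h3 ⊢
                refine ⟨h3.1, List.isChain_singleton _, ?_⟩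
                intro p hp q hq
                simp at hq
                subst hq
                exact fun hfst => h3.2.2 p hp ⟨i, g'⟩ (by simp) hfst
              · have h1 : of a * x =
                    plist ((⟨i, a * g⟩ : Σ i, G i) :: (r ++ [⟨i, g'⟩])) := by
                  rw [← hxl]
                  simp [plist, map_mul, mul_assoc]
                have h2 : x * of a = plist ((⟨i, g⟩ :: r) ++ [(⟨i, g' * a⟩ : Σ i, G i)]) := by
                  rw [← hxl]
                  simp [plist, map_mul, mul_assoc]
                rw [← h1, ← h2, hx]
            rw [List.cons_append, List.cons.injEq] at heq
            have hgg : a * g = g := by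
              have := heq.1
              simpa using this
            have hgg' : a * g = 1 * g := by rw [one_mul]; exact hgg
            exact (ha (mul_right_cancel hgg')).elim
      · -- case (c): first index i, last index k ≠ i : length mismatch
        have hchb : List.IsChain (fun p q : Σ i, G i => p.1 ≠ q.1)
            (((⟨i, g⟩ : Σ i, G i) :: (r ++ [⟨k, g'⟩])) ++ [⟨i, a⟩]) := by
          rw [List.isChain_append]
          refine ⟨hch, List.isChain_singleton _, ?_⟩
          intro p hp q hq
          simp at hq
          subst hq
          have hrw : ((⟨i, g⟩ : Σ i, G i) :: (r ++ [⟨k, g'⟩])) =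
              ((⟨i, g⟩ : Σ i, G i) :: r) ++ [⟨k, g'⟩] := by simp
          rw [hrw, List.getLast?_concat] at hp
          simp at hp
          subst hp
          exact fun h => hki (by simpa using h)
        have hneb : ∀ p ∈ ((⟨i, g⟩ : Σ i, G i) :: (r ++ [⟨k, g'⟩])) ++ [(⟨i, a⟩ : Σ i, G i)],
            p.2 ≠ 1 := by
          intro p hp
          rcases List.mem_append.mp hp with hp | hp
          · exact hne p hp
          · simp at hp; subst hp; exact ha
        by_cases hag : a * g = 1
        · have heq : r ++ [(⟨k, g'⟩ : Σ i, G i)] =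
              ((⟨i, g⟩ : Σ i, G i) :: (r ++ [⟨k, g'⟩])) ++ [⟨i, a⟩] := by
            refine word_list_eq ?_ ?_ hneb hchb ?_
            · intro p hp; exact hne p (List.mem_cons_of_mem _ hp)
            · exact (List.isChain_cons.mp hch).2
            · have h1 : of a * x = plist (r ++ [(⟨k, g'⟩ : Σ i, G i)]) := by
                rw [← hxl, plist_cons, ← mul_assoc, ← map_mul, hag, map_one, one_mul]
              have h2 : x * of a =
                  plist (((⟨i, g⟩ : Σ i, G i) :: (r ++ [⟨k, g'⟩])) ++ [⟨i, a⟩]) := by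
                rw [← hxl]
                simp [plist, mul_assoc]
              rw [← h1, ← h2, hx]
          have hlen := congrArg List.length heq
          simp at hlen
        · have heq : (⟨i, a * g⟩ : Σ i, G i) :: (r ++ [⟨k, g'⟩]) =
              ((⟨i, g⟩ : Σ i, G i) :: (r ++ [⟨k, g'⟩])) ++ [⟨i, a⟩] := by
            refine word_list_eq ?_ ?_ hneb hchb ?_
            · intro p hp
              rcases List.mem_cons.mp hp with rfl | hp
              · exact hag
              · exact hne p (List.mem_cons_of_mem _ hp)
            · exact List.isChain_cons.mpr
                ⟨(List.isChain_cons.mp hch).1, (List.isChain_cons.mp hch).2⟩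
            · have h1 : of a * x =
                  plist ((⟨i, a * g⟩ : Σ i, G i) :: (r ++ [⟨k, g'⟩])) := by
                rw [← hxl]
                simp [plist, map_mul, mul_assoc]
              have h2 : x * of a =
                  plist (((⟨i, g⟩ : Σ i, G i) :: (r ++ [⟨k, g'⟩])) ++ [⟨i, a⟩]) := by
                rw [← hxl]
                simp [plist, mul_assoc]
              rw [← h1, ← h2, hx]
          have hlen := congrArg List.length heq
          simp at hlen
  · -- j ≠ i
    rcases List.eq_nil_or_concat' ((⟨j, g⟩ : Σ i, G i) :: t) with hnil | ⟨t', ⟨k, g'⟩, hsplit⟩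
    · simp at hnil
    by_cases hki : k = i
    · -- case (b): length mismatch
      subst k
      have hxt : x = plist t' * of g' := by
        rw [← hxl, hsplit, plist_append, plist_cons, plist_nil, mul_one]
      by_cases hga : g' * a = 1
      · have heq : (⟨i, a⟩ : Σ i, G i) :: ⟨j, g⟩ :: t = t' := by
          refine word_list_eq ?_ ?_ ?_ ?_ ?_
          · intro p hp
            rcases List.mem_cons.mp hp with rfl | hp
            · exact ha
            · exact hne p hp
          · exact List.isChain_cons.mpr ⟨by simpa using fun h => hji h.symm, hch⟩
          · intro p hp
            exact hne p (by rw [hsplit]; exact List.mem_append_left _ hp)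
          · have h3 := hch
            rw [hsplit, List.isChain_append] at h3
            exact h3.1
          · have h1 : of a * x = plist ((⟨i, a⟩ : Σ i, G i) :: ⟨j, g⟩ :: t) := by
              rw [← hxl]; simp [plist, mul_assoc]
            have h2 : x * of a = plist t' := by
              rw [hxt, mul_assoc, ← map_mul, hga, map_one, mul_one]
            rw [← h1, ← h2, hx]
        have hlen1 := congrArg List.length heq
        have hlen2 := congrArg List.length hsplit
        simp at hlen1 hlen2
        omega
      · have heq : (⟨i, a⟩ : Σ i, G i) :: ⟨j, g⟩ :: t = t' ++ [⟨i, g' * a⟩] := by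
          refine word_list_eq ?_ ?_ ?_ ?_ ?_
          · intro p hp
            rcases List.mem_cons.mp hp with rfl | hp
            · exact ha
            · exact hne p hp
          · exact List.isChain_cons.mpr ⟨by simpa using fun h => hji h.symm, hch⟩
          · intro p hp
            rcases List.mem_append.mp hp with hp | hp
            · exact hne p (by rw [hsplit]; exact List.mem_append_left _ hp)
            · simp at hp; subst hp; exact hga
          · have h3 := hch
            rw [hsplit, List.isChain_append] at h3
            rw [List.isChain_append]
            refine ⟨h3.1, List.isChain_singleton _, ?_⟩
            intro p hp q hq
            simp at hq
            subst hq
            exact fun hfst => h3.2.2 p hp ⟨i, g'⟩ (by simp) hfst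
          · have h1 : of a * x = plist ((⟨i, a⟩ : Σ i, G i) :: ⟨j, g⟩ :: t) := by
              rw [← hxl]; simp [plist, mul_assoc]
            have h2 : x * of a = plist (t' ++ [(⟨i, g' * a⟩ : Σ i, G i)]) := by
              rw [hxt, plist_append, plist_cons, plist_nil, mul_one, mul_assoc, ← map_mul]
            rw [← h1, ← h2, hx]
        have hlen1 := congrArg List.length heq
        have hlen2 := congrArg List.length hsplit
        simp at hlen1 hlen2
        omega
    · -- case (a): both ends avoid i : head comparison
      have heq : (⟨i, a⟩ : Σ i, G i) :: ⟨j, g⟩ :: t = (⟨j, g⟩ :: t) ++ [⟨i, a⟩] := by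
        refine word_list_eq ?_ ?_ ?_ ?_ ?_
        · intro p hp
          rcases List.mem_cons.mp hp with rfl | hp
          · exact ha
          · exact hne p hp
        · exact List.isChain_cons.mpr ⟨by simpa using fun h => hji h.symm, hch⟩
        · intro p hp
          rcases List.mem_append.mp hp with hp | hp
          · exact hne p hp
          · simp at hp; subst hp; exact ha
        · rw [List.isChain_append]
          refine ⟨hch, List.isChain_singleton _, ?_⟩
          intro p hp q hq
          simp at hq
          subst hq
          rw [hsplit, List.getLast?_concat] at hp
          simp at hp
          subst hp
          exact fun h => hki (by simpa using h)
        · have h1 : of a * x = plist ((⟨i, a⟩ : Σ i, G i) :: ⟨j, g⟩ :: t) := by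
            rw [← hxl]; simp [plist, mul_assoc]
          have h2 : x * of a = plist (((⟨j, g⟩ : Σ i, G i) :: t) ++ [⟨i, a⟩]) := by
            rw [← hxl]
            simp [plist, mul_assoc]
          rw [← h1, ← h2, hx]
      rw [List.cons_append, List.cons.injEq] at heq
      exact absurd (congrArg Sigma.fst heq.1).symm hji

end Aux

universe uu vv

section Transfer

variable (G₁ : Type uu) (G₂ : Type vv) [Group G₁] [Group G₂]

private abbrev FF : Bool → Type (max uu vv) := fun b =>
  cond b (ULift.{max uu vv} G₁) (ULift.{max uu vv} G₂)

private instance condGroup : ∀ b : Bool, Group (FF G₁ G₂ b)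
  | true => inferInstanceAs (Group (ULift G₁))
  | false => inferInstanceAs (Group (ULift G₂))

private def upl : G₁ →* FF G₁ G₂ true :=
  (MulEquiv.ulift (α := G₁)).symm.toMonoidHom

private def upr : G₂ →* FF G₁ G₂ false :=
  (MulEquiv.ulift (α := G₂)).symm.toMonoidHom

private def toI : Coprod G₁ G₂ →* CoprodI (FF G₁ G₂) :=
  Coprod.lift ((of (i := true)).comp (upl G₁ G₂)) ((of (i := false)).comp (upr G₁ G₂))

private def fromI : CoprodI (FF G₁ G₂) →* Coprod G₁ G₂ :=
  CoprodI.lift (fun b => match b with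
    | true => (Coprod.inl (N := G₂)).comp (MulEquiv.ulift (α := G₁)).toMonoidHom
    | false => (Coprod.inr (M := G₁)).comp (MulEquiv.ulift (α := G₂)).toMonoidHom)

private theorem fromI_toI (x : Coprod G₁ G₂) : fromI G₁ G₂ (toI G₁ G₂ x) = x := by
  have h : (fromI G₁ G₂).comp (toI G₁ G₂) = MonoidHom.id _ := by
    apply Coprod.hom_ext
    · ext g
      show fromI G₁ G₂ (toI G₁ G₂ (Coprod.inl g)) = Coprod.inl g
      simp only [toI, Coprod.lift_apply_inl, MonoidHom.comp_apply, fromI, lift_of]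
      rfl
    · ext g
      show fromI G₁ G₂ (toI G₁ G₂ (Coprod.inr g)) = Coprod.inr g
      simp only [toI, Coprod.lift_apply_inr, MonoidHom.comp_apply, fromI, lift_of]
      rfl
  exact DFunLike.congr_fun h x

end Transfer

/-- Let `G₁`, `G₂` be groups and `a ≠ 1` in `G₁`. Then the centralizer of
`inl a` in the free product `G₁ ∗ G₂` is contained in the image of `inl : G₁ →* G₁ ∗ G₂`. -/
theorem centralizer_inl_le_inl_range
    (G₁ G₂ : Type*) [Group G₁] [Group G₂] (a : G₁) (ha : a ≠ 1) :
    Subgroup.centralizer ({Coprod.inl a} : Set (Coprod G₁ G₂)) ≤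
      (Coprod.inl : G₁ →* Coprod G₁ G₂).range := by
  intro x hxc
  have hcomm : Coprod.inl a * x = x * Coprod.inl a :=
    (Subgroup.mem_centralizer_iff.mp hxc) (Coprod.inl a) rfl
  have hcomm' : of (i := true) (M := FF G₁ G₂) (ULift.up a) * toI G₁ G₂ x =
      toI G₁ G₂ x * of (i := true) (ULift.up a) := by
    have := congrArg (toI G₁ G₂) hcomm
    simp [toI, upl, map_mul, Coprod.lift_apply_inl] at this
    exact this
  have ha' : (ULift.up a : FF G₁ G₂ true) ≠ 1 := by
    intro h
    exact ha (congrArg ULift.down h)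
  obtain ⟨g, hg⟩ := key ha' hcomm'
  refine ⟨g.down, ?_⟩
  have := congrArg (fromI G₁ G₂) hg
  rw [fromI_toI] at this
  rw [this]
  simp only [fromI, lift_of]
  rfl
end

section
/- Let C₂ denote the cyclic group of order 2 (the multiplicative group Multiplicative (ZMod 2)), with nontrivial element u. In the free product C₂ ∗ C₂, let w = inl(u)·inr(u). Then the centralizer of w in C₂ ∗ C₂ equals the cyclic subgroup generated by w, i.e., the subgroup of all integer powers of w. -/
open Monoid

section Aux

private theorem zmod2_cases : ∀ a : ZMod 2, a = 0 ∨ a = 1 := by decide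

private theorem uu_aux : (1 : ZMod 2) + 1 = 0 := by decide

/-- hom from C₂ determined by an involution -/
private def homC2 {G : Type*} [Group G] (x : G) (hx : x * x = 1) :
    Multiplicative (ZMod 2) →* G :=
  MonoidHom.mk' (fun s => if s.toAdd = 0 then 1 else x) (by
    intro a b
    rcases zmod2_cases a.toAdd with ha | ha <;> rcases zmod2_cases b.toAdd with hb | hb <;>
      simp [toAdd_mul, ha, hb, hx, uu_aux])

@[simp] private theorem homC2_apply_u {G : Type*} [Group G] (x : G) (hx : x * x = 1) :
    homC2 x hx (Multiplicative.ofAdd 1) = x := by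
  simp [homC2, MonoidHom.mk'_apply]

private theorem homC2_ext {G : Type*} [Group G] {f g : Multiplicative (ZMod 2) →* G}
    (h : f (Multiplicative.ofAdd 1) = g (Multiplicative.ofAdd 1)) : f = g := by
  refine MonoidHom.ext fun x => ?_
  rcases zmod2_cases x.toAdd with hx | hx
  · have : x = 1 := by
      have : x = Multiplicative.ofAdd x.toAdd := rfl
      rw [this, hx]; rfl
    simp [this]
  · have : x = Multiplicative.ofAdd 1 := by
      have : x = Multiplicative.ofAdd x.toAdd := rfl
      rw [this, hx]
    rw [this, h]

private abbrev C2 := Multiplicative (ZMod 2)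

private def uC2 : C2 := Multiplicative.ofAdd 1

private theorem uC2_mul_self : uC2 * uC2 = 1 := by decide

private theorem uC2_inv : uC2⁻¹ = uC2 := by decide

/-- the inversion action of C₂ on ℤ -/
private def negAct : C2 →* MulAut (Multiplicative ℤ) :=
  homC2 (MulEquiv.inv (Multiplicative ℤ)) (by ext x; simp [MulEquiv.inv]; exact inv_inv x)

private theorem negAct_u (n : Multiplicative ℤ) : negAct uC2 n = n⁻¹ := by
  simp [negAct, uC2, MulEquiv.inv]
  rfl

private abbrev D := Multiplicative ℤ ⋊[negAct] C2

private abbrev Cop := Coprod C2 C2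

private def w : Cop := Coprod.inl uC2 * Coprod.inr uC2

private theorem conj_w : Coprod.inl uC2 * w * (Coprod.inl uC2)⁻¹ = w⁻¹ := by
  have h1 : (Coprod.inl uC2 : Cop) * Coprod.inl uC2 = 1 := by
    rw [← map_mul, uC2_mul_self, map_one]
  have h2 : (Coprod.inr uC2 : Cop)⁻¹ = Coprod.inr uC2 := by rw [← map_inv, uC2_inv]
  have h3 : (Coprod.inl uC2 : Cop)⁻¹ = Coprod.inl uC2 := by rw [← map_inv, uC2_inv]
  rw [w, mul_inv_rev, h2, h3]
  simp only [← mul_assoc]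
  rw [h1, one_mul]

private theorem conj_w_zpow (n : ℤ) :
    Coprod.inl uC2 * w ^ n * (Coprod.inl uC2)⁻¹ = w ^ (-n) := by
  have := map_zpow (MulAut.conj (Coprod.inl uC2 : Cop)).toMonoidHom w n
  simp only [MulEquiv.coe_toMonoidHom, MulAut.conj_apply] at this
  rw [this, conj_w, zpow_neg, inv_zpow]

/-- map to the semidirect product -/
private def bb : D := ⟨Multiplicative.ofAdd (-1 : ℤ), uC2⟩

private theorem bb_mul_self : bb * bb = 1 := by
  ext
  · show bb.left * negAct bb.right bb.left = 1
    simp [bb, negAct_u]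
  · show bb.right * bb.right = 1
    exact uC2_mul_self

private theorem inrD_mul_self : (SemidirectProduct.inr uC2 : D) * SemidirectProduct.inr uC2 = 1 := by
  rw [← map_mul, uC2_mul_self, map_one]

private def φ : Cop →* D :=
  Coprod.lift (homC2 (SemidirectProduct.inr uC2) inrD_mul_self) (homC2 bb bb_mul_self)

private theorem φ_inl_u : φ (Coprod.inl uC2) = SemidirectProduct.inr uC2 := by
  simp [φ, uC2]

private theorem φ_inr_u : φ (Coprod.inr uC2) = bb := by
  simp [φ, uC2]

private def ψ : D →* Cop :=
  SemidirectProduct.lift (zpowersHom Cop w) Coprod.inl (by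
    intro g
    rcases zmod2_cases g.toAdd with hg | hg
    · have hg1 : g = 1 := by
        have : g = Multiplicative.ofAdd g.toAdd := rfl
        rw [this, hg]; rfl
      ext
      simp [hg1]
    · have hg1 : g = uC2 := by
        have : g = Multiplicative.ofAdd g.toAdd := rfl
        rw [this, hg]; rfl
      subst hg1
      ext
      simp only [MonoidHom.comp_apply, MulEquiv.coe_toMonoidHom, MulAut.conj_apply,
        zpowersHom_apply, negAct_u, toAdd_inv, toAdd_ofAdd]
      rw [← conj_w_zpow])

private theorem ψφ : ψ.comp φ = MonoidHom.id Cop := by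
  apply Coprod.hom_ext
  · apply homC2_ext
    show ψ (φ (Coprod.inl uC2)) = Coprod.inl uC2
    rw [φ_inl_u]
    simp [ψ]
  · apply homC2_ext
    show ψ (φ (Coprod.inr uC2)) = Coprod.inr uC2
    rw [φ_inr_u]
    have : ψ bb = w ^ (-1 : ℤ) * Coprod.inl uC2 := by
      simp [ψ, bb, SemidirectProduct.lift]
    rw [this, zpow_neg_one, w, mul_inv_rev, mul_assoc, inv_mul_cancel, mul_one, ← map_inv,
      uC2_inv]

private theorem φ_inj : Function.Injective φ := by
  intro a b h
  have := congrArg ψ h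
  have h1 : ψ (φ a) = a := DFunLike.congr_fun ψφ a
  have h2 : ψ (φ b) = b := DFunLike.congr_fun ψφ b
  rwa [h1, h2] at this

private def dd : D := SemidirectProduct.inl (Multiplicative.ofAdd (1 : ℤ))

private theorem φ_w : φ w = dd := by
  rw [w, map_mul, φ_inl_u, φ_inr_u]
  ext
  · show (SemidirectProduct.inr uC2 : D).left *
      negAct (SemidirectProduct.inr uC2 : D).right bb.left = dd.left
    simp [bb, dd, negAct_u]
  · show (SemidirectProduct.inr uC2 : D).right * bb.right = dd.right
    simp [bb, dd, uC2_mul_self]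

private theorem dd_zpow (k : ℤ) : dd ^ k = SemidirectProduct.inl (Multiplicative.ofAdd k) := by
  rw [dd, ← map_zpow]
  congr 1
  rw [← ofAdd_zsmul, smul_eq_mul, mul_one]

private theorem centD (x : D) (hx : x * dd = dd * x) : ∃ k : ℤ, x = dd ^ k := by
  rcases zmod2_cases x.right.toAdd with hs | hs
  · refine ⟨x.left.toAdd, ?_⟩
    rw [dd_zpow]
    ext
    · simp
    · show x.right = 1
      have : x.right = Multiplicative.ofAdd x.right.toAdd := rfl
      rw [this, hs]; rfl
  · exfalso
    have hr : x.right = uC2 := by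
      have : x.right = Multiplicative.ofAdd x.right.toAdd := rfl
      rw [this, hs]; rfl
    have hleft := congrArg SemidirectProduct.left hx
    simp only [SemidirectProduct.mul_left, dd, SemidirectProduct.left_inl,
      SemidirectProduct.right_inl, hr, negAct_u, map_one, MulAut.one_apply] at hleft
    -- hleft : x.left * (ofAdd 1)⁻¹ = ofAdd 1 * x.left (roughly)
    have h2 := congrArg Multiplicative.toAdd hleft
    simp only [toAdd_mul, toAdd_inv, toAdd_ofAdd] at h2
    omega

/-- Let `C₂ = Multiplicative (ZMod 2)` with nontrivial element
`u = Multiplicative.ofAdd 1`. In the free product `C₂ ∗ C₂` (the infinite dihedral group),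
let `w = inl u * inr u`. Then the centralizer of `w` equals the cyclic subgroup generated by
`w`, i.e. the subgroup of all integer powers of `w`. -/
theorem centralizer_inl_mul_inr_eq_zpowers :
    Subgroup.centralizer
        ({Coprod.inl (Multiplicative.ofAdd (1 : ZMod 2)) *
            Coprod.inr (Multiplicative.ofAdd (1 : ZMod 2))} :
          Set (Coprod (Multiplicative (ZMod 2)) (Multiplicative (ZMod 2)))) =
      Subgroup.zpowers
        (Coprod.inl (Multiplicative.ofAdd (1 : ZMod 2)) *
          Coprod.inr (Multiplicative.ofAdd (1 : ZMod 2))) := by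
  have hw : (Coprod.inl (Multiplicative.ofAdd (1 : ZMod 2)) *
      Coprod.inr (Multiplicative.ofAdd (1 : ZMod 2))) = w := rfl
  rw [hw]
  ext x
  rw [Subgroup.mem_centralizer_iff, Subgroup.mem_zpowers_iff]
  constructor
  · intro h
    have hcomm : w * x = x * w := h w (Set.mem_singleton w)
    have hφ : φ x * dd = dd * φ x := by
      rw [← φ_w, ← map_mul, ← map_mul, hcomm]
    obtain ⟨k, hk⟩ := centD (φ x) hφ
    refine ⟨k, ?_⟩
    apply φ_inj
    rw [map_zpow, φ_w, ← hk]
  · rintro ⟨k, rfl⟩ y hy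
    rw [Set.mem_singleton_iff] at hy
    subst hy
    exact (Commute.zpow_right (Commute.refl w) k).eq
end Aux
end
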